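/- Assume u ≠ 0 and v ≠ 0. Then (x,y) ∈ ℝ^m × ℝ^n is a saddle point of f (a critical point that is not a local minimum) if and only if at least one of the following holds: (a) |Σ_{i : u_i ≠ 0} sgn(u_i) x_i| = Σ_{i : u_i = 0} |x_i| and y = 0; or (b) x = 0 and |Σ_{j : v_j ≠ 0} sgn(v_j) y_j| = Σ_{j : v_j = 0} |y_j|; or (c) Σ_{i : u_i ≠ 0} sgn(u_i) x_i = 0, Σ_{j : v_j ≠ 0} sgn(v_j) y_j = 0, x_i y_j / (u_i v_j) ≤ 1 whenever u_i v_j ≠ 0, x_i = 0 whenever u_i = 0, and y_j = 0 whenever v_j = 0. -/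

import Mathlib

open scoped Classical

/-- The set-valued sign function: `{-1}` for negative, `[-1,1]` at zero, `{1}` for positive. -/
noncomputable def signSet (t : ℝ) : Set ℝ :=
  if t < 0 then {-1} else if 0 < t then {1} else Set.Icc (-1) 1

namespace SaddleAux

open Finset

/-! ### Real.sign helpers -/

lemma sign_mul_self (a : ℝ) : Real.sign a * a = |a| := by
  rcases lt_trichotomy a 0 with h | h | h
  · rw [Real.sign_of_neg h, abs_of_neg h]; ring
  · simp [h]
  · rw [Real.sign_of_pos h, abs_of_pos h]; ring

lemma abs_sign_le_one (a : ℝ) : |Real.sign a| ≤ 1 := by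
  rcases Real.sign_apply_eq a with h | h | h <;> rw [h] <;> norm_num

lemma sign_sq_of_ne_zero {a : ℝ} (h : a ≠ 0) : Real.sign a * Real.sign a = 1 := by
  rcases Real.sign_apply_eq_of_ne_zero a h with h' | h' <;> rw [h'] <;> norm_num

lemma sign_ne_zero_of_ne_zero {a : ℝ} (h : a ≠ 0) : Real.sign a ≠ 0 := by
  simpa [Real.sign_eq_zero_iff] using h

lemma sign_mul (a b : ℝ) : Real.sign (a * b) = Real.sign a * Real.sign b := by
  rcases lt_trichotomy a 0 with ha | ha | ha <;>
    rcases lt_trichotomy b 0 with hb | hb | hb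
  · rw [Real.sign_of_pos (mul_pos_of_neg_of_neg ha hb), Real.sign_of_neg ha,
      Real.sign_of_neg hb]; ring
  · simp [hb]
  · rw [Real.sign_of_neg (mul_neg_of_neg_of_pos ha hb), Real.sign_of_neg ha,
      Real.sign_of_pos hb]; ring
  · simp [ha]
  · simp [ha]
  · simp [ha]
  · rw [Real.sign_of_neg (mul_neg_of_pos_of_neg ha hb), Real.sign_of_pos ha,
      Real.sign_of_neg hb]; ring
  · simp [hb]
  · rw [Real.sign_of_pos (mul_pos ha hb), Real.sign_of_pos ha, Real.sign_of_pos hb]; ring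

/-! ### signSet helpers -/

lemma signSet_of_neg {r : ℝ} (h : r < 0) : signSet r = {-1} := by
  simp [signSet, h]

lemma signSet_of_pos {r : ℝ} (h : 0 < r) : signSet r = {1} := by
  simp [signSet, h, not_lt_of_gt h]

lemma signSet_zero : signSet 0 = Set.Icc (-1) 1 := by
  simp [signSet]

lemma abs_le_one_of_mem_signSet {t r : ℝ} (h : t ∈ signSet r) : |t| ≤ 1 := by
  unfold signSet at h
  split_ifs at h with h1 h2
  · simp only [Set.mem_singleton_iff] at h; rw [h]; norm_num
  · simp only [Set.mem_singleton_iff] at h; rw [h]; norm_num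
  · rw [abs_le]; exact ⟨h.1, h.2⟩

lemma neg_one_le_of_mem_signSet {t r : ℝ} (h : t ∈ signSet r) : -1 ≤ t :=
  (abs_le.1 (abs_le_one_of_mem_signSet h)).1

lemma le_one_of_mem_signSet {t r : ℝ} (h : t ∈ signSet r) : t ≤ 1 :=
  (abs_le.1 (abs_le_one_of_mem_signSet h)).2

lemma eq_sign_of_mem_signSet {t r : ℝ} (hr : r ≠ 0) (h : t ∈ signSet r) :
    t = Real.sign r := by
  rcases hr.lt_or_gt with h' | h'
  · rw [signSet_of_neg h'] at h; rw [Real.sign_of_neg h']; exact h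
  · rw [signSet_of_pos h'] at h; rw [Real.sign_of_pos h']; exact h

lemma neg_one_mem_signSet {r : ℝ} (h : r ≤ 0) : (-1 : ℝ) ∈ signSet r := by
  rcases h.lt_or_eq with h' | h'
  · rw [signSet_of_neg h']; rfl
  · rw [h', signSet_zero]; constructor <;> norm_num

lemma one_mem_signSet {r : ℝ} (h : 0 ≤ r) : (1 : ℝ) ∈ signSet r := by
  rcases h.lt_or_eq with h' | h'
  · rw [signSet_of_pos h']; rfl
  · rw [← h', signSet_zero]; constructor <;> norm_num

lemma mem_signSet_zero {t : ℝ} (h : |t| ≤ 1) : t ∈ signSet 0 := by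
  rw [signSet_zero]; exact ⟨(abs_le.1 h).1, (abs_le.1 h).2⟩

lemma le_zero_of_neg_one_mem_signSet {r : ℝ} (h : (-1 : ℝ) ∈ signSet r) : r ≤ 0 := by
  by_contra hc
  push_neg at hc
  rw [signSet_of_pos hc] at h
  norm_num at h

lemma eq_zero_of_zero_mem_signSet {r : ℝ} (h : (0 : ℝ) ∈ signSet r) : r = 0 := by
  rcases lt_trichotomy r 0 with h' | h' | h'
  · rw [signSet_of_neg h'] at h; norm_num at h
  · exact h'
  · rw [signSet_of_pos h'] at h; norm_num at h

lemma mem_signSet_smul {t r s : ℝ} (hs : s = 1 ∨ s = -1) (h : t ∈ signSet r) :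
    s * t ∈ signSet (s * r) := by
  rcases hs with rfl | rfl
  · simpa using h
  · simp only [neg_one_mul]
    rcases lt_trichotomy r 0 with h' | h' | h'
    · rw [signSet_of_neg h'] at h
      rw [signSet_of_pos (by linarith : (0:ℝ) < -r)]
      simp only [Set.mem_singleton_iff] at h ⊢
      rw [h]; norm_num
    · subst h'
      rw [signSet_zero] at h
      rw [neg_zero, signSet_zero]
      exact ⟨by linarith [h.2], by linarith [h.1]⟩
    · rw [signSet_of_pos h'] at h
      rw [signSet_of_neg (by linarith : -r < 0)]
      simp only [Set.mem_singleton_iff] at h ⊢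
      rw [h]


noncomputable def SS {m : ℕ} (u x : Fin m → ℝ) : ℝ :=
  ∑ i ∈ Finset.univ.filter (fun i => u i ≠ 0), Real.sign (u i) * x i

noncomputable def ZZ {m : ℕ} (u x : Fin m → ℝ) : ℝ :=
  ∑ i ∈ Finset.univ.filter (fun i => u i = 0), |x i|

noncomputable def PP {m : ℕ} (u x : Fin m → ℝ) : ℝ :=
  ∑ i ∈ Finset.univ.filter (fun i => u i ≠ 0), |x i|

lemma SS_eq {m : ℕ} (u x : Fin m → ℝ) : SS u x = ∑ i, Real.sign (u i) * x i := by
  refine Finset.sum_filter_of_ne fun i _ h => ?_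
  intro h0
  apply h
  rw [h0, Real.sign_zero, zero_mul]

lemma ZZ_nonneg {m : ℕ} (u x : Fin m → ℝ) : 0 ≤ ZZ u x :=
  Finset.sum_nonneg fun i _ => abs_nonneg _

lemma PP_nonneg {m : ℕ} (u x : Fin m → ℝ) : 0 ≤ PP u x :=
  Finset.sum_nonneg fun i _ => abs_nonneg _

lemma abs_SS_le_PP {m : ℕ} (u x : Fin m → ℝ) : |SS u x| ≤ PP u x := by
  refine (Finset.abs_sum_le_sum_abs _ _).trans (Finset.sum_le_sum fun i _ => ?_)
  rw [abs_mul]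
  calc |Real.sign (u i)| * |x i| ≤ 1 * |x i| :=
        mul_le_mul_of_nonneg_right (abs_sign_le_one (u i)) (abs_nonneg _)
    _ = |x i| := one_mul _

lemma abs_SS_le_sum_abs {m : ℕ} (u x : Fin m → ℝ) : |SS u x| ≤ ∑ i, |x i| := by
  refine (abs_SS_le_PP u x).trans ?_
  exact Finset.sum_le_sum_of_subset_of_nonneg (Finset.filter_subset _ _)
    (fun i _ _ => abs_nonneg _)

lemma abs_sub_ge (a b : ℝ) : |b| - Real.sign b * a ≤ |a - b| := by
  rcases lt_trichotomy b 0 with h | h | h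
  · rw [Real.sign_of_neg h, abs_of_neg h]
    have : a - b ≤ |a - b| := le_abs_self _
    linarith
  · simp [h]
  · rw [Real.sign_of_pos h, abs_of_pos h]
    have : -(a - b) ≤ |a - b| := neg_le_abs _
    linarith

lemma lower_bound {m n : ℕ} (u x : Fin m → ℝ) (v y : Fin n → ℝ) :
    (∑ i, |u i|) * (∑ j, |v j|) - SS u x * SS v y
      + (ZZ u x * (∑ j, |y j|) + PP u x * ZZ v y)
    ≤ ∑ i, ∑ j, |x i * y j - u i * v j| := by
  have key : ∀ i j, |u i * v j| - (Real.sign (u i) * Real.sign (v j)) * (x i * y j)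
      + (if u i = 0 then |x i * y j| else if v j = 0 then |x i * y j| else 0)
      ≤ |x i * y j - u i * v j| := by
    intro i j
    by_cases hui : u i = 0
    · simp [hui, Real.sign_zero]
    · by_cases hvj : v j = 0
      · simp [hvj, Real.sign_zero]
      · rw [if_neg hui, if_neg hvj, add_zero, ← sign_mul]
        exact abs_sub_ge _ _
  have hA : ∑ i, ∑ j, |u i * v j| = (∑ i, |u i|) * (∑ j, |v j|) := by
    rw [Finset.sum_mul_sum]
    exact Finset.sum_congr rfl fun i _ => Finset.sum_congr rfl fun j _ => abs_mul _ _
  have hB : ∑ i, ∑ j, (Real.sign (u i) * Real.sign (v j)) * (x i * y j)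
      = SS u x * SS v y := by
    rw [SS_eq, SS_eq, Finset.sum_mul_sum]
    exact Finset.sum_congr rfl fun i _ => Finset.sum_congr rfl fun j _ => by ring
  have hC : ∑ i, ∑ j, (if u i = 0 then |x i * y j| else if v j = 0 then |x i * y j| else 0)
      = ZZ u x * (∑ j, |y j|) + PP u x * ZZ v y := by
    rw [← Finset.sum_filter_add_sum_filter_not Finset.univ (fun i => u i = 0)]
    congr 1
    · rw [ZZ, Finset.sum_mul]
      refine Finset.sum_congr rfl fun i hi => ?_
      have h := (Finset.mem_filter.1 hi).2
      rw [Finset.mul_sum]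
      refine Finset.sum_congr rfl fun j _ => ?_
      rw [if_pos h, abs_mul]
    · rw [PP, Finset.sum_mul]
      refine Finset.sum_congr rfl fun i hi => ?_
      have hui : ¬ (u i = 0) := by
        have := (Finset.mem_filter.1 hi).2
        simpa using this
      simp only [if_neg hui]
      rw [ZZ, Finset.mul_sum, Finset.sum_filter]
      refine Finset.sum_congr rfl fun j _ => ?_
      by_cases hvj : v j = 0
      · rw [if_pos hvj, if_pos hvj, abs_mul]
      · rw [if_neg hvj, if_neg hvj]
  calc (∑ i, |u i|) * (∑ j, |v j|) - SS u x * SS v y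
      + (ZZ u x * (∑ j, |y j|) + PP u x * ZZ v y)
      = ∑ i, ∑ j, (|u i * v j| - (Real.sign (u i) * Real.sign (v j)) * (x i * y j)
        + (if u i = 0 then |x i * y j| else if v j = 0 then |x i * y j| else 0)) := by
        simp only [Finset.sum_add_distrib, Finset.sum_sub_distrib, hA, hB, hC]
    _ ≤ ∑ i, ∑ j, |x i * y j - u i * v j| :=
        Finset.sum_le_sum fun i _ => Finset.sum_le_sum fun j _ => key i j

lemma abs_sign_eq_one {a : ℝ} (h : a ≠ 0) : |Real.sign a| = 1 := by
  rcases Real.sign_apply_eq_of_ne_zero a h with h' | h' <;> rw [h'] <;> norm_num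

lemma sign_mul_abs (a : ℝ) : Real.sign a * |a| = a := by
  rcases lt_trichotomy a 0 with h | h | h
  · rw [Real.sign_of_neg h, abs_of_neg h]; ring
  · simp [h]
  · rw [Real.sign_of_pos h, abs_of_pos h]; ring

lemma sign_mem_signSet (r : ℝ) : Real.sign r ∈ signSet r := by
  rcases lt_trichotomy r 0 with h | h | h
  · rw [signSet_of_neg h, Real.sign_of_neg h]; rfl
  · subst h; rw [signSet_zero, Real.sign_zero]; constructor <;> norm_num
  · rw [signSet_of_pos h, Real.sign_of_pos h]; rfl

lemma sum_abs_mul {m n : ℕ} (u : Fin m → ℝ) (v : Fin n → ℝ) :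
    ∑ i, ∑ j, |u i * v j| = (∑ i, |u i|) * (∑ j, |v j|) := by
  rw [Finset.sum_mul_sum]
  exact Finset.sum_congr rfl fun i _ => Finset.sum_congr rfl fun j _ => abs_mul _ _

lemma sum_abs_pos_of_ne_zero {m : ℕ} {u : Fin m → ℝ} (hu : u ≠ 0) :
    0 < ∑ i, |u i| := by
  obtain ⟨i0, hi0⟩ := Function.ne_iff.1 hu
  refine Finset.sum_pos' (fun i _ => abs_nonneg _) ⟨i0, Finset.mem_univ _, ?_⟩
  simpa using abs_pos.2 hi0

lemma isLocalMin_y0 {m n : ℕ} (u : Fin m → ℝ) (v : Fin n → ℝ) (x : Fin m → ℝ)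
    (hlt : |SS u x| < ZZ u x) :
    IsLocalMin (fun q : (Fin m → ℝ) × (Fin n → ℝ) =>
      ∑ i, ∑ j, |q.1 i * q.2 j - u i * v j|) (x, 0) := by
  have hcont : Continuous (fun q : (Fin m → ℝ) × (Fin n → ℝ) => ZZ u q.1 - |SS u q.1|) := by
    apply Continuous.sub
    · apply continuous_finset_sum
      intro i _
      exact ((continuous_apply i).comp continuous_fst).abs
    · apply Continuous.abs
      apply continuous_finset_sum
      intro i _
      exact continuous_const.mul ((continuous_apply i).comp continuous_fst)
  have hopen : IsOpen {q : (Fin m → ℝ) × (Fin n → ℝ) | (0:ℝ) < ZZ u q.1 - |SS u q.1|} :=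
    isOpen_lt continuous_const hcont
  have hmem : (x, (0 : Fin n → ℝ)) ∈
      {q : (Fin m → ℝ) × (Fin n → ℝ) | (0:ℝ) < ZZ u q.1 - |SS u q.1|} := by
    simp only [Set.mem_setOf_eq]
    linarith
  refine Filter.eventually_of_mem (hopen.mem_nhds hmem) fun q hq => ?_
  simp only [Set.mem_setOf_eq] at hq
  have hval : ∑ i, ∑ j, |x i * (0 : Fin n → ℝ) j - u i * v j|
      = (∑ i, |u i|) * (∑ j, |v j|) := by
    simp only [Pi.zero_apply, mul_zero, zero_sub, abs_neg]
    exact sum_abs_mul u v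
  have hb := lower_bound u q.1 v q.2
  have h1 : |SS v q.2| ≤ ∑ j, |q.2 j| := abs_SS_le_sum_abs v q.2
  have h2 : |SS u q.1| ≤ ZZ u q.1 := by linarith
  have h3 : SS u q.1 * SS v q.2 ≤ ZZ u q.1 * (∑ j, |q.2 j|) := by
    calc SS u q.1 * SS v q.2 ≤ |SS u q.1 * SS v q.2| := le_abs_self _
      _ = |SS u q.1| * |SS v q.2| := abs_mul _ _
      _ ≤ ZZ u q.1 * (∑ j, |q.2 j|) :=
          mul_le_mul h2 h1 (abs_nonneg _) (le_trans (abs_nonneg _) h2)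
  have h4 : 0 ≤ PP u q.1 * ZZ v q.2 := mul_nonneg (PP_nonneg _ _) (ZZ_nonneg _ _)
  show ∑ i, ∑ j, |x i * (0 : Fin n → ℝ) j - u i * v j| ≤ _
  rw [hval]
  linarith

lemma crit_y0_le {m n : ℕ} (u : Fin m → ℝ) (v : Fin n → ℝ) (hv : v ≠ 0) (x : Fin m → ℝ)
    (Λ : Matrix (Fin m) (Fin n) ℝ)
    (hmem : ∀ i j, Λ i j ∈ signSet (x i * (0 : Fin n → ℝ) j - u i * v j))
    (hcol : ∀ j, ∑ i, Λ i j * x i = 0) :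
    |SS u x| ≤ ZZ u x := by
  obtain ⟨j0, hj0⟩ := Function.ne_iff.1 hv
  have hj0' : v j0 ≠ 0 := by simpa using hj0
  have hforce : ∀ i, u i ≠ 0 → Λ i j0 = -(Real.sign (u i) * Real.sign (v j0)) := by
    intro i hui
    have h := hmem i j0
    simp only [Pi.zero_apply, mul_zero, zero_sub] at h
    have hne : -(u i * v j0) ≠ 0 := by
      simp only [neg_ne_zero]
      exact mul_ne_zero hui hj0'
    have := eq_sign_of_mem_signSet hne h
    rwa [Real.sign_neg, sign_mul] at this
  have hsplit := Finset.sum_filter_add_sum_filter_not Finset.univ (fun i => u i = 0)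
    (fun i => Λ i j0 * x i)
  rw [hcol j0] at hsplit
  have hpart2 : ∑ i ∈ Finset.univ.filter (fun i => ¬ u i = 0), Λ i j0 * x i
      = -(Real.sign (v j0) * SS u x) := by
    rw [SS, Finset.mul_sum, ← Finset.sum_neg_distrib]
    refine Finset.sum_congr (by simp [ne_eq]) fun i hi => ?_
    have hui : u i ≠ 0 := by simpa using (Finset.mem_filter.1 hi).2
    rw [hforce i hui]
    ring
  have heqn : Real.sign (v j0) * SS u x
      = ∑ i ∈ Finset.univ.filter (fun i => u i = 0), Λ i j0 * x i := by
    rw [hpart2] at hsplit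
    linarith
  calc |SS u x| = |Real.sign (v j0)| * |SS u x| := by rw [abs_sign_eq_one hj0', one_mul]
    _ = |Real.sign (v j0) * SS u x| := (abs_mul _ _).symm
    _ = |∑ i ∈ Finset.univ.filter (fun i => u i = 0), Λ i j0 * x i| := by rw [heqn]
    _ ≤ ∑ i ∈ Finset.univ.filter (fun i => u i = 0), |Λ i j0 * x i| :=
        Finset.abs_sum_le_sum_abs _ _
    _ ≤ ZZ u x := by
        refine Finset.sum_le_sum fun i _ => ?_
        rw [abs_mul]
        calc |Λ i j0| * |x i| ≤ 1 * |x i| :=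
            mul_le_mul_of_nonneg_right (abs_le_one_of_mem_signSet (hmem i j0)) (abs_nonneg _)
          _ = |x i| := one_mul _

lemma crit_a {m n : ℕ} (u : Fin m → ℝ) (v : Fin n → ℝ) (x : Fin m → ℝ)
    (heq : |SS u x| = ZZ u x) :
    ∃ Λ : Matrix (Fin m) (Fin n) ℝ,
      (∀ i j, Λ i j ∈ signSet (x i * (0 : Fin n → ℝ) j - u i * v j)) ∧
      (∀ i, ∑ j, Λ i j * (0 : Fin n → ℝ) j = 0) ∧ (∀ j, ∑ i, Λ i j * x i = 0) := by
  refine ⟨fun i j => Real.sign (v j) *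
    (if u i = 0 then Real.sign (SS u x) * Real.sign (x i) else -Real.sign (u i)), ?_, ?_, ?_⟩
  · intro i j
    dsimp only
    by_cases hui : u i = 0
    · have hz : x i * (0 : Fin n → ℝ) j - u i * v j = 0 := by simp [hui]
      rw [hz, if_pos hui]
      apply mem_signSet_zero
      rw [abs_mul, abs_mul]
      calc |Real.sign (v j)| * (|Real.sign (SS u x)| * |Real.sign (x i)|)
          ≤ 1 * (1 * 1) := by
            have h1 := abs_sign_le_one (v j)
            have h2 := abs_sign_le_one (SS u x)
            have h3 := abs_sign_le_one (x i)
            have n1 := abs_nonneg (Real.sign (v j))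
            have n2 := abs_nonneg (Real.sign (SS u x))
            have n3 := abs_nonneg (Real.sign (x i))
            have e1 : |Real.sign (SS u x)| * |Real.sign (x i)| ≤ 1 * 1 :=
              mul_le_mul h2 h3 n3 (by norm_num)
            have e2 : 0 ≤ |Real.sign (SS u x)| * |Real.sign (x i)| := mul_nonneg n2 n3
            calc |Real.sign (v j)| * (|Real.sign (SS u x)| * |Real.sign (x i)|)
                ≤ 1 * (|Real.sign (SS u x)| * |Real.sign (x i)|) :=
                  mul_le_mul_of_nonneg_right h1 e2
              _ ≤ 1 * (1 * 1) := by
                  rw [one_mul, one_mul]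
                  linarith
        _ = 1 := by norm_num
    · by_cases hvj : v j = 0
      · have hz : x i * (0 : Fin n → ℝ) j - u i * v j = 0 := by simp [hvj]
        rw [hz, hvj, Real.sign_zero, zero_mul]
        exact mem_signSet_zero (by norm_num)
      · rw [if_neg hui]
        have hz : x i * (0 : Fin n → ℝ) j - u i * v j = -(u i * v j) := by simp
        rw [hz]
        have hs : Real.sign (-(u i * v j)) = Real.sign (v j) * -Real.sign (u i) := by
          rw [Real.sign_neg, sign_mul]; ring
        rw [← hs]
        exact sign_mem_signSet _
  · intro i; simp
  · intro j
    simp only [mul_assoc]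
    rw [← Finset.mul_sum]
    have hz : ∑ i, (if u i = 0 then Real.sign (SS u x) * Real.sign (x i)
        else -Real.sign (u i)) * x i = 0 := by
      rw [← Finset.sum_filter_add_sum_filter_not Finset.univ (fun i => u i = 0)]
      have hp1 : ∑ i ∈ Finset.univ.filter (fun i => u i = 0),
          (if u i = 0 then Real.sign (SS u x) * Real.sign (x i) else -Real.sign (u i)) * x i
          = Real.sign (SS u x) * ZZ u x := by
        rw [ZZ, Finset.mul_sum]
        refine Finset.sum_congr rfl fun i hi => ?_
        rw [if_pos (Finset.mem_filter.1 hi).2, mul_assoc, sign_mul_self]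
      have hp2 : ∑ i ∈ Finset.univ.filter (fun i => ¬ u i = 0),
          (if u i = 0 then Real.sign (SS u x) * Real.sign (x i) else -Real.sign (u i)) * x i
          = -SS u x := by
        rw [SS, ← Finset.sum_neg_distrib]
        refine Finset.sum_congr (by simp [ne_eq]) fun i hi => ?_
        rw [if_neg (Finset.mem_filter.1 hi).2]
        ring
      rw [hp1, hp2, ← heq, sign_mul_abs]
      ring
    rw [hz, mul_zero]

lemma not_isLocalMin_of_curve {E : Type*} [TopologicalSpace E] {F : E → ℝ} {p : E}
    (γ : ℝ → E) (hγ : Filter.Tendsto γ (nhdsWithin 0 (Set.Ioi 0)) (nhds p))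
    (hlt : ∀ᶠ ε in nhdsWithin 0 (Set.Ioi 0), F (γ ε) < F p) :
    ¬ IsLocalMin F p := by
  intro h
  have h2 : ∀ᶠ ε in nhdsWithin (0:ℝ) (Set.Ioi 0), F p ≤ F (γ ε) := hγ.eventually h
  obtain ⟨ε, hε1, hε2⟩ := (hlt.and h2).exists
  linarith

lemma abs_sub_eq {z c : ℝ} (hc : c ≠ 0) (h : Real.sign c * z ≤ |c|) :
    |z - c| = |c| - Real.sign c * z := by
  rcases hc.lt_or_gt with h' | h'
  · rw [Real.sign_of_neg h'] at h ⊢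
    rw [abs_of_neg h'] at h ⊢
    rw [abs_of_nonneg (by linarith : (0:ℝ) ≤ z - c)]
    ring
  · rw [Real.sign_of_pos h'] at h ⊢
    rw [abs_of_pos h'] at h ⊢
    rw [abs_of_nonpos (by linarith : z - c ≤ 0)]
    ring

lemma sum_abs_eq_filter {m : ℕ} (u : Fin m → ℝ) :
    ∑ i ∈ Finset.univ.filter (fun i => u i ≠ 0), |u i| = ∑ i, |u i| :=
  Finset.sum_filter_of_ne fun i _ h => by simpa using fun h0 => h (by rw [h0]; simp)

lemma notmin_a {m n : ℕ} (u : Fin m → ℝ) (v : Fin n → ℝ) (x : Fin m → ℝ)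
    (hu : u ≠ 0) (hv : v ≠ 0) (heq : |SS u x| = ZZ u x) :
    ¬ IsLocalMin (fun q : (Fin m → ℝ) × (Fin n → ℝ) =>
      ∑ i, ∑ j, |q.1 i * q.2 j - u i * v j|) (x, 0) := by
  obtain ⟨j0, hj0⟩ := Function.ne_iff.1 hv
  have hj0' : v j0 ≠ 0 := by simpa using hj0
  set σ : ℝ := if 0 ≤ SS u x then 1 else -1 with hσdef
  have hσS : σ * SS u x = |SS u x| := by
    by_cases h : 0 ≤ SS u x
    · rw [hσdef, if_pos h, one_mul, abs_of_nonneg h]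
    · push_neg at h
      rw [hσdef, if_neg (not_le.2 h), abs_of_neg h]; ring
  have hσabs : |σ| = 1 := by
    by_cases h : 0 ≤ SS u x
    · rw [hσdef, if_pos h]; norm_num
    · rw [hσdef, if_neg h]; norm_num
  set γ : ℝ → (Fin m → ℝ) × (Fin n → ℝ) := fun ε =>
    (fun i => x i + ε * σ * u i,
     fun j => if j = j0 then ε * σ * Real.sign (v j0) else 0) with hγdef
  have hγc : Continuous γ := by
    apply Continuous.prodMk
    · apply continuous_pi
      intro i
      exact continuous_const.add ((continuous_id.mul continuous_const).mul continuous_const)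
    · apply continuous_pi
      intro j
      by_cases h : j = j0
      · simp only [h, if_true]
        exact (continuous_id.mul continuous_const).mul continuous_const
      · simp only [h, if_false]
        exact continuous_const
  have hγ0 : γ 0 = (x, 0) := by
    rw [hγdef]
    refine Prod.ext ?_ ?_ <;> funext k <;> simp
  have hγt : Filter.Tendsto γ (nhdsWithin 0 (Set.Ioi 0)) (nhds (x, (0 : Fin n → ℝ))) := by
    have := hγc.tendsto 0
    rw [hγ0] at this
    exact this.mono_left nhdsWithin_le_nhds
  -- eventual smallness conditions
  have hev : ∀ᶠ ε in nhdsWithin (0:ℝ) (Set.Ioi 0),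
      (0 < ε ∧ ε ≤ 1 ∧ ∀ i ∈ Finset.univ.filter (fun i => u i ≠ 0),
        ε * (|x i| + |u i|) ≤ |u i * v j0|) := by
    have e1 : ∀ᶠ ε in nhdsWithin (0:ℝ) (Set.Ioi 0), 0 < ε :=
      eventually_mem_nhdsWithin
    have e2 : ∀ᶠ ε in nhdsWithin (0:ℝ) (Set.Ioi 0), ε ≤ 1 := by
      have : Set.Iio (1:ℝ) ∈ nhds (0:ℝ) := Iio_mem_nhds (by norm_num)
      exact Filter.Eventually.filter_mono nhdsWithin_le_nhds
        (Filter.eventually_of_mem this fun ε hε => le_of_lt hε)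
    have e3 : ∀ᶠ ε in nhdsWithin (0:ℝ) (Set.Ioi 0),
        ∀ i ∈ Finset.univ.filter (fun i => u i ≠ 0),
          ε * (|x i| + |u i|) ≤ |u i * v j0| := by
      rw [Finset.eventually_all]
      intro i hi
      have hui : u i ≠ 0 := by simpa using (Finset.mem_filter.1 hi).2
      have hpos : 0 < |u i * v j0| := abs_pos.2 (mul_ne_zero hui hj0')
      have hcont : Filter.Tendsto (fun ε : ℝ => ε * (|x i| + |u i|)) (nhds 0)
          (nhds 0) := by
        have := (continuous_id.mul (continuous_const :
          Continuous fun _ : ℝ => |x i| + |u i|)).tendsto 0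
        simpa [Pi.mul_def] using this
      exact Filter.Eventually.filter_mono nhdsWithin_le_nhds
        ((hcont.eventually_lt_const hpos).mono fun ε h => le_of_lt h)
    exact e1.and (e2.and e3)
  apply not_isLocalMin_of_curve γ hγt
  refine hev.mono fun ε hε => ?_
  obtain ⟨hε0, hε1, hεcond⟩ := hε
  -- value at (x,0)
  have hval0 : ∑ i, ∑ j, |x i * (0 : Fin n → ℝ) j - u i * v j|
      = (∑ i, |u i|) * (∑ j, |v j|) := by
    simp only [Pi.zero_apply, mul_zero, zero_sub, abs_neg]
    exact sum_abs_mul u v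
  -- per-row computation
  have key_i : ∀ i, ∑ j, |(γ ε).1 i * (γ ε).2 j - u i * v j|
      = (∑ j, |u i * v j|)
        + (if u i = 0 then ε * |x i| else -(ε * σ * (Real.sign (u i) * x i)) - ε^2 * |u i|) := by
    intro i
    rw [← Finset.sum_erase_add Finset.univ _ (Finset.mem_univ j0),
        ← Finset.sum_erase_add Finset.univ (fun j => |u i * v j|) (Finset.mem_univ j0)]
    have herase : ∑ j ∈ Finset.univ.erase j0, |(γ ε).1 i * (γ ε).2 j - u i * v j|
        = ∑ j ∈ Finset.univ.erase j0, |u i * v j| := by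
      refine Finset.sum_congr rfl fun j hj => ?_
      have hne : j ≠ j0 := (Finset.mem_erase.1 hj).1
      simp only [hγdef, if_neg hne]
      norm_num
    rw [herase]
    have hj0term : |(γ ε).1 i * (γ ε).2 j0 - u i * v j0|
        = |u i * v j0|
          + (if u i = 0 then ε * |x i| else -(ε * σ * (Real.sign (u i) * x i)) - ε^2 * |u i|) := by
      simp only [hγdef, if_pos rfl, eq_self_iff_true, if_true]
      by_cases hui : u i = 0
      · rw [if_pos hui, hui]
        simp only [zero_mul, mul_zero, sub_zero, zero_add, add_zero]
        rw [abs_mul, abs_mul, abs_mul, hσabs, abs_sign_eq_one hj0',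
          abs_of_pos hε0, abs_zero]
        ring
      · rw [if_neg hui]
        have hc : u i * v j0 ≠ 0 := mul_ne_zero hui hj0'
        have hsz : Real.sign (u i * v j0) * ((x i + ε * σ * u i) * (ε * σ * Real.sign (v j0)))
            = ε * σ * (Real.sign (u i) * x i) + ε^2 * |u i| := by
          rw [sign_mul]
          have hs2 : Real.sign (v j0) * Real.sign (v j0) = 1 := sign_sq_of_ne_zero hj0'
          have hσ2 : σ * σ = 1 := by
            by_cases h : 0 ≤ SS u x
            · rw [hσdef, if_pos h]; norm_num
            · rw [hσdef, if_neg h]; norm_num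
          have husign : Real.sign (u i) * u i = |u i| := sign_mul_self (u i)
          linear_combination (Real.sign (u i) * (x i + ε * σ * u i) * (ε * σ)) * hs2
            + (ε^2 * Real.sign (u i) * u i) * hσ2 + ε^2 * husign
        have hbound : Real.sign (u i * v j0) *
            ((x i + ε * σ * u i) * (ε * σ * Real.sign (v j0))) ≤ |u i * v j0| := by
          rw [hsz]
          have b1 : ε * σ * (Real.sign (u i) * x i) ≤ ε * |x i| := by
            have : σ * (Real.sign (u i) * x i) ≤ |σ * (Real.sign (u i) * x i)| := le_abs_self _
            have habs : |σ * (Real.sign (u i) * x i)| ≤ |x i| := by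
              rw [abs_mul, hσabs, one_mul, abs_mul]
              calc |Real.sign (u i)| * |x i| ≤ 1 * |x i| :=
                  mul_le_mul_of_nonneg_right (abs_sign_le_one _) (abs_nonneg _)
                _ = |x i| := one_mul _
            calc ε * σ * (Real.sign (u i) * x i) = ε * (σ * (Real.sign (u i) * x i)) := by ring
              _ ≤ ε * |x i| := mul_le_mul_of_nonneg_left (this.trans habs) hε0.le
          have b2 : ε^2 * |u i| ≤ ε * |u i| := by
            have : ε^2 ≤ ε := by nlinarith
            exact mul_le_mul_of_nonneg_right this (abs_nonneg _)
          have := hεcond i (Finset.mem_filter.2 ⟨Finset.mem_univ _, hui⟩)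
          calc ε * σ * (Real.sign (u i) * x i) + ε^2 * |u i|
              ≤ ε * |x i| + ε * |u i| := by linarith
            _ = ε * (|x i| + |u i|) := by ring
            _ ≤ |u i * v j0| := this
        rw [abs_sub_eq hc hbound, hsz]
        ring
    rw [hj0term]
    ring
  -- sum up
  have hsum : ∑ i, ∑ j, |(γ ε).1 i * (γ ε).2 j - u i * v j|
      = (∑ i, |u i|) * (∑ j, |v j|) - ε^2 * (∑ i, |u i|) := by
    have : ∑ i, ∑ j, |(γ ε).1 i * (γ ε).2 j - u i * v j|
        = ∑ i, ((∑ j, |u i * v j|)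
          + (if u i = 0 then ε * |x i| else -(ε * σ * (Real.sign (u i) * x i)) - ε^2 * |u i|)) :=
      Finset.sum_congr rfl fun i _ => key_i i
    rw [this, Finset.sum_add_distrib, sum_abs_mul u v]
    congr 1
    rw [← Finset.sum_filter_add_sum_filter_not Finset.univ (fun i => u i = 0)]
    have hp1 : ∑ i ∈ Finset.univ.filter (fun i => u i = 0),
        (if u i = 0 then ε * |x i| else -(ε * σ * (Real.sign (u i) * x i)) - ε^2 * |u i|)
        = ε * ZZ u x := by
      rw [ZZ, Finset.mul_sum]
      exact Finset.sum_congr rfl fun i hi => by rw [if_pos (Finset.mem_filter.1 hi).2]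
    have hp2 : ∑ i ∈ Finset.univ.filter (fun i => ¬ u i = 0),
        (if u i = 0 then ε * |x i| else -(ε * σ * (Real.sign (u i) * x i)) - ε^2 * |u i|)
        = -(ε * σ * SS u x) - ε^2 * (∑ i, |u i|) := by
      calc ∑ i ∈ Finset.univ.filter (fun i => ¬ u i = 0),
          (if u i = 0 then ε * |x i| else -(ε * σ * (Real.sign (u i) * x i)) - ε^2 * |u i|)
          = ∑ i ∈ Finset.univ.filter (fun i => ¬ u i = 0),
            (-(ε * σ * (Real.sign (u i) * x i)) - ε^2 * |u i|) :=
            Finset.sum_congr rfl fun i hi => if_neg (Finset.mem_filter.1 hi).2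
        _ = -(ε * σ * ∑ i ∈ Finset.univ.filter (fun i => ¬ u i = 0), Real.sign (u i) * x i)
            - ε^2 * ∑ i ∈ Finset.univ.filter (fun i => ¬ u i = 0), |u i| := by
            rw [Finset.sum_sub_distrib, Finset.sum_neg_distrib, ← Finset.mul_sum, ← Finset.mul_sum]
        _ = -(ε * σ * SS u x) - ε^2 * (∑ i, |u i|) := by
            rw [SS, ← sum_abs_eq_filter u]
    rw [hp1, hp2]
    have : ε * σ * SS u x = ε * ZZ u x := by
      rw [mul_assoc, hσS, heq]
    rw [this]
    ring
  have hAu : 0 < ∑ i, |u i| := sum_abs_pos_of_ne_zero hu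
  have hq : 0 < ε^2 * (∑ i, |u i|) := mul_pos (pow_pos hε0 2) hAu
  show ∑ i, ∑ j, |(γ ε).1 i * (γ ε).2 j - u i * v j|
      < ∑ i, ∑ j, |x i * (0 : Fin n → ℝ) j - u i * v j|
  rw [hsum, hval0]
  linarith

lemma Fswap_eq {m n : ℕ} (u : Fin m → ℝ) (v : Fin n → ℝ) (a : Fin m → ℝ) (b : Fin n → ℝ) :
    ∑ i, ∑ j, |a i * b j - u i * v j| = ∑ j, ∑ i, |b j * a i - v j * u i| := by
  rw [Finset.sum_comm]
  refine Finset.sum_congr rfl fun j _ => Finset.sum_congr rfl fun i _ => ?_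
  rw [mul_comm (a i) (b j), mul_comm (u i) (v j)]

lemma isLocalMin_of_swapped {m n : ℕ} (u : Fin m → ℝ) (v : Fin n → ℝ) {x : Fin m → ℝ}
    {y : Fin n → ℝ}
    (h : IsLocalMin (fun q : (Fin n → ℝ) × (Fin m → ℝ) =>
      ∑ j, ∑ i, |q.1 j * q.2 i - v j * u i|) (y, x)) :
    IsLocalMin (fun q : (Fin m → ℝ) × (Fin n → ℝ) =>
      ∑ i, ∑ j, |q.1 i * q.2 j - u i * v j|) (x, y) := by
  have h2 : ∀ᶠ q in nhds ((x, y) : (Fin m → ℝ) × (Fin n → ℝ)),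
      (∑ j, ∑ i, |y j * x i - v j * u i|) ≤ ∑ j, ∑ i, |q.2 j * q.1 i - v j * u i| :=
    (continuous_swap.tendsto ((x, y) : (Fin m → ℝ) × (Fin n → ℝ))).eventually h
  refine h2.mono fun q hq => ?_
  show ∑ i, ∑ j, |x i * y j - u i * v j| ≤ ∑ i, ∑ j, |q.1 i * q.2 j - u i * v j|
  rw [Fswap_eq u v x y, Fswap_eq u v q.1 q.2]
  exact hq

lemma sign_mul_le_abs_of_div_le_one {a c : ℝ} (hc : c ≠ 0) (h : a / c ≤ 1) :
    Real.sign c * a ≤ |c| := by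
  rcases hc.lt_or_gt with h' | h'
  · rw [Real.sign_of_neg h', abs_of_neg h']
    rcases div_le_one_iff.1 h with ⟨h1, _⟩ | h1 | ⟨_, h2⟩
    · linarith
    · exact absurd h1 hc
    · linarith
  · rw [Real.sign_of_pos h', abs_of_pos h', one_mul]
    exact (div_le_one h').1 h

lemma div_le_one_of_sign_mul_le_abs {a c : ℝ} (hc : c ≠ 0) (h : Real.sign c * a ≤ |c|) :
    a / c ≤ 1 := by
  rcases hc.lt_or_gt with h' | h'
  · rw [Real.sign_of_neg h', abs_of_neg h'] at h
    rw [div_le_one_iff]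
    right; right
    exact ⟨h', by linarith⟩
  · rw [Real.sign_of_pos h', abs_of_pos h', one_mul] at h
    exact (div_le_one h').2 h

lemma isLocalMin_global {m n : ℕ} (u x : Fin m → ℝ) (v : Fin n → ℝ) (y : Fin n → ℝ)
    (h : ∀ i j, x i * y j = u i * v j) :
    IsLocalMin (fun q : (Fin m → ℝ) × (Fin n → ℝ) =>
      ∑ i, ∑ j, |q.1 i * q.2 j - u i * v j|) (x, y) := by
  refine Filter.Eventually.of_forall fun q => ?_
  have h0 : ∑ i, ∑ j, |x i * y j - u i * v j| = 0 := by
    refine Finset.sum_eq_zero fun i _ => Finset.sum_eq_zero fun j _ => ?_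
    rw [h i j, sub_self, abs_zero]
  show ∑ i, ∑ j, |x i * y j - u i * v j| ≤ _
  rw [h0]
  exact Finset.sum_nonneg fun i _ => Finset.sum_nonneg fun j _ => abs_nonneg _

lemma crit_c {m n : ℕ} (u x : Fin m → ℝ) (v y : Fin n → ℝ)
    (hSu : SS u x = 0) (hSv : SS v y = 0)
    (hr : ∀ i j, u i * v j ≠ 0 → x i * y j / (u i * v j) ≤ 1)
    (hx0 : ∀ i, u i = 0 → x i = 0) (hy0 : ∀ j, v j = 0 → y j = 0) :
    ∃ Λ : Matrix (Fin m) (Fin n) ℝ,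
      (∀ i j, Λ i j ∈ signSet (x i * y j - u i * v j)) ∧
      (∀ i, ∑ j, Λ i j * y j = 0) ∧ (∀ j, ∑ i, Λ i j * x i = 0) := by
  refine ⟨fun i j => -(Real.sign (u i) * Real.sign (v j)), ?_, ?_, ?_⟩
  · intro i j
    dsimp only
    by_cases hui : u i = 0
    · have hz : x i * y j - u i * v j = 0 := by rw [hx0 i hui, hui]; ring
      rw [hz, hui, Real.sign_zero, zero_mul, neg_zero]
      exact mem_signSet_zero (by norm_num)
    · by_cases hvj : v j = 0
      · have hz : x i * y j - u i * v j = 0 := by rw [hy0 j hvj, hvj]; ring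
        rw [hz, hvj, Real.sign_zero, mul_zero, neg_zero]
        exact mem_signSet_zero (by norm_num)
      · have hc : u i * v j ≠ 0 := mul_ne_zero hui hvj
        have hb := sign_mul_le_abs_of_div_le_one hc (hr i j hc)
        rw [← sign_mul]
        rcases hc.lt_or_gt with h' | h'
        · rw [Real.sign_of_neg h'] at hb ⊢
          rw [abs_of_neg h'] at hb
          have : (1:ℝ) ∈ signSet (x i * y j - u i * v j) :=
            one_mem_signSet (by linarith)
          simpa using this
        · rw [Real.sign_of_pos h'] at hb ⊢
          rw [abs_of_pos h'] at hb
          exact neg_one_mem_signSet (by linarith)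
  · intro i
    dsimp only
    calc ∑ j, -(Real.sign (u i) * Real.sign (v j)) * y j
        = ∑ j, -Real.sign (u i) * (Real.sign (v j) * y j) :=
          Finset.sum_congr rfl fun j _ => by ring
      _ = -Real.sign (u i) * ∑ j, Real.sign (v j) * y j := by rw [Finset.mul_sum]
      _ = 0 := by rw [← SS_eq, hSv, mul_zero]
  · intro j
    dsimp only
    calc ∑ i, -(Real.sign (u i) * Real.sign (v j)) * x i
        = ∑ i, -Real.sign (v j) * (Real.sign (u i) * x i) :=
          Finset.sum_congr rfl fun i _ => by ring
      _ = -Real.sign (v j) * ∑ i, Real.sign (u i) * x i := by rw [Finset.mul_sum]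
      _ = 0 := by rw [← SS_eq, hSu, mul_zero]

lemma exact_value {m n : ℕ} (u : Fin m → ℝ) (v : Fin n → ℝ) (a : Fin m → ℝ) (b : Fin n → ℝ)
    (hcond : ∀ i j, u i ≠ 0 → v j ≠ 0 → Real.sign (u i * v j) * (a i * b j) ≤ |u i * v j|)
    (ha0 : ∀ i, u i = 0 → a i = 0) (hb0 : ∀ j, v j = 0 → b j = 0) :
    ∑ i, ∑ j, |a i * b j - u i * v j|
      = (∑ i, |u i|) * (∑ j, |v j|)
        - (∑ i, Real.sign (u i) * a i) * (∑ j, Real.sign (v j) * b j) := by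
  have key : ∀ i j, |a i * b j - u i * v j|
      = |u i * v j| - (Real.sign (u i) * a i) * (Real.sign (v j) * b j) := by
    intro i j
    by_cases hui : u i = 0
    · rw [ha0 i hui, hui, Real.sign_zero]
      simp
    · by_cases hvj : v j = 0
      · rw [hb0 j hvj, hvj, Real.sign_zero]
        simp
      · have hc : u i * v j ≠ 0 := mul_ne_zero hui hvj
        rw [abs_sub_eq hc (hcond i j hui hvj), sign_mul]
        ring
  calc ∑ i, ∑ j, |a i * b j - u i * v j|
      = ∑ i, ∑ j, (|u i * v j| - (Real.sign (u i) * a i) * (Real.sign (v j) * b j)) :=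
        Finset.sum_congr rfl fun i _ => Finset.sum_congr rfl fun j _ => key i j
    _ = (∑ i, |u i|) * (∑ j, |v j|)
        - (∑ i, Real.sign (u i) * a i) * (∑ j, Real.sign (v j) * b j) := by
        simp only [Finset.sum_sub_distrib]
        rw [sum_abs_mul u v, Finset.sum_mul_sum]
        congr 1
        rw [Finset.sum_mul_sum]

lemma exists_neg_coord {m : ℕ} (u x : Fin m → ℝ) (hSu : SS u x = 0)
    (hx0 : ∀ i, u i = 0 → x i = 0) (hx : x ≠ 0) :
    ∃ i, Real.sign (u i) * x i < 0 := by
  by_contra hcon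
  push_neg at hcon
  obtain ⟨i0, hi0⟩ := Function.ne_iff.1 hx
  have hxi0 : x i0 ≠ 0 := by simpa using hi0
  have hui0 : u i0 ≠ 0 := fun h => hxi0 (hx0 i0 h)
  have hmem : i0 ∈ Finset.univ.filter (fun i => u i ≠ 0) :=
    Finset.mem_filter.2 ⟨Finset.mem_univ _, hui0⟩
  have := (Finset.sum_eq_zero_iff_of_nonneg
    (fun i _ => hcon i)).1 hSu i0 hmem
  exact (mul_ne_zero (sign_ne_zero_of_ne_zero hui0) hxi0) this

lemma notmin_c {m n : ℕ} (u x : Fin m → ℝ) (v y : Fin n → ℝ)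
    (hSu : SS u x = 0) (hSv : SS v y = 0)
    (hr : ∀ i j, u i * v j ≠ 0 → x i * y j / (u i * v j) ≤ 1)
    (hx0 : ∀ i, u i = 0 → x i = 0) (hy0 : ∀ j, v j = 0 → y j = 0)
    (hx : x ≠ 0) (hy : y ≠ 0) :
    ¬ IsLocalMin (fun q : (Fin m → ℝ) × (Fin n → ℝ) =>
      ∑ i, ∑ j, |q.1 i * q.2 j - u i * v j|) (x, y) := by
  classical
  set γ : ℝ → (Fin m → ℝ) × (Fin n → ℝ) := fun ε =>
    (fun i => x i + ε * (if Real.sign (u i) * x i < 0 then Real.sign (u i) else 0),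
     fun j => y j + ε * (if Real.sign (v j) * y j < 0 then Real.sign (v j) else 0)) with hγdef
  have hγc : Continuous γ := by
    apply Continuous.prodMk <;> apply continuous_pi <;> intro k <;>
      exact continuous_const.add (continuous_id.mul continuous_const)
  have hγ0 : γ 0 = (x, y) := by
    rw [hγdef]
    refine Prod.ext ?_ ?_ <;> funext k <;> simp
  have hγt : Filter.Tendsto γ (nhdsWithin 0 (Set.Ioi 0)) (nhds (x, y)) := by
    have := hγc.tendsto 0
    rw [hγ0] at this
    exact this.mono_left nhdsWithin_le_nhds
  set A : ℝ := ((Finset.univ.filter fun i => Real.sign (u i) * x i < 0).card : ℝ) with hAdef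
  set B : ℝ := ((Finset.univ.filter fun j => Real.sign (v j) * y j < 0).card : ℝ) with hBdef
  have hApos : 0 < A := by
    obtain ⟨i1, hi1⟩ := exists_neg_coord u x hSu hx0 hx
    rw [hAdef]
    exact_mod_cast Finset.card_pos.2 ⟨i1, Finset.mem_filter.2 ⟨Finset.mem_univ _, hi1⟩⟩
  have hBpos : 0 < B := by
    obtain ⟨j1, hj1⟩ := exists_neg_coord v y hSv hy0 hy
    rw [hBdef]
    exact_mod_cast Finset.card_pos.2 ⟨j1, Finset.mem_filter.2 ⟨Finset.mem_univ _, hj1⟩⟩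
  -- coordinate identities
  have hA1 : ∀ (ε : ℝ) i, Real.sign (u i) * (γ ε).1 i
      = Real.sign (u i) * x i + ε * (if Real.sign (u i) * x i < 0 then (1:ℝ) else 0) := by
    intro ε i
    simp only [hγdef]
    by_cases h : Real.sign (u i) * x i < 0
    · rw [if_pos h, if_pos h]
      have hs : u i ≠ 0 := by
        intro h0
        rw [h0, Real.sign_zero, zero_mul] at h
        exact lt_irrefl _ h
      have hsq := sign_sq_of_ne_zero hs
      linear_combination ε * hsq
    · rw [if_neg h, if_neg h]
      ring
  have hB1 : ∀ (ε : ℝ) j, Real.sign (v j) * (γ ε).2 j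
      = Real.sign (v j) * y j + ε * (if Real.sign (v j) * y j < 0 then (1:ℝ) else 0) := by
    intro ε j
    simp only [hγdef]
    by_cases h : Real.sign (v j) * y j < 0
    · rw [if_pos h, if_pos h]
      have hs : v j ≠ 0 := by
        intro h0
        rw [h0, Real.sign_zero, zero_mul] at h
        exact lt_irrefl _ h
      have hsq := sign_sq_of_ne_zero hs
      linear_combination ε * hsq
    · rw [if_neg h, if_neg h]
      ring
  have hXz : ∀ (ε : ℝ) i, u i = 0 → (γ ε).1 i = 0 := by
    intro ε i h
    simp only [hγdef]
    rw [hx0 i h, h, Real.sign_zero, zero_mul]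
    simp
  have hYz : ∀ (ε : ℝ) j, v j = 0 → (γ ε).2 j = 0 := by
    intro ε j h
    simp only [hγdef]
    rw [hy0 j h, h, Real.sign_zero, zero_mul]
    simp
  have hsum1 : ∀ ε : ℝ, ∑ i, Real.sign (u i) * (γ ε).1 i = ε * A := by
    intro ε
    calc ∑ i, Real.sign (u i) * (γ ε).1 i
        = ∑ i, (Real.sign (u i) * x i
            + ε * (if Real.sign (u i) * x i < 0 then (1:ℝ) else 0)) :=
          Finset.sum_congr rfl fun i _ => hA1 ε i
      _ = (∑ i, Real.sign (u i) * x i)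
          + ε * ∑ i, (if Real.sign (u i) * x i < 0 then (1:ℝ) else 0) := by
          rw [Finset.sum_add_distrib, Finset.mul_sum]
      _ = ε * A := by
          rw [← SS_eq, hSu, Finset.sum_boole, zero_add, hAdef]
  have hsum2 : ∀ ε : ℝ, ∑ j, Real.sign (v j) * (γ ε).2 j = ε * B := by
    intro ε
    calc ∑ j, Real.sign (v j) * (γ ε).2 j
        = ∑ j, (Real.sign (v j) * y j
            + ε * (if Real.sign (v j) * y j < 0 then (1:ℝ) else 0)) :=
          Finset.sum_congr rfl fun j _ => hB1 ε j
      _ = (∑ j, Real.sign (v j) * y j)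
          + ε * ∑ j, (if Real.sign (v j) * y j < 0 then (1:ℝ) else 0) := by
          rw [Finset.sum_add_distrib, Finset.mul_sum]
      _ = ε * B := by
          rw [← SS_eq, hSv, Finset.sum_boole, zero_add, hBdef]
  -- base bound
  have hbase : ∀ i j, u i ≠ 0 → v j ≠ 0 →
      (Real.sign (u i) * x i) * (Real.sign (v j) * y j) ≤ |u i * v j| := by
    intro i j hui hvj
    have hc : u i * v j ≠ 0 := mul_ne_zero hui hvj
    have := sign_mul_le_abs_of_div_le_one hc (hr i j hc)
    rw [sign_mul] at this
    linarith [this, (by ring : (Real.sign (u i) * x i) * (Real.sign (v j) * y j)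
      = Real.sign (u i) * Real.sign (v j) * (x i * y j))]
  -- eventual entrywise condition
  have hev : ∀ᶠ ε in nhdsWithin (0:ℝ) (Set.Ioi 0), ∀ i j, u i ≠ 0 → v j ≠ 0 →
      Real.sign (u i * v j) * ((γ ε).1 i * (γ ε).2 j) ≤ |u i * v j| := by
    rw [Filter.eventually_all]
    intro i
    rw [Filter.eventually_all]
    intro j
    by_cases hui : u i = 0
    · exact Filter.Eventually.of_forall fun ε h => absurd hui h
    · by_cases hvj : v j = 0
      · exact Filter.Eventually.of_forall fun ε _ h => absurd hvj h
      · have hkey : ∀ ε : ℝ, Real.sign (u i * v j) * ((γ ε).1 i * (γ ε).2 j)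
            = (Real.sign (u i) * (γ ε).1 i) * (Real.sign (v j) * (γ ε).2 j) := by
          intro ε
          rw [sign_mul]
          ring
        set a : ℝ := Real.sign (u i) * x i with hadef
        set b : ℝ := Real.sign (v j) * y j with hbdef
        have hble := hbase i j hui hvj
        rcases lt_or_eq_of_le hble with hlt | heq2
        · have hcont : Filter.Tendsto (fun ε : ℝ =>
              (Real.sign (u i) * (γ ε).1 i) * (Real.sign (v j) * (γ ε).2 j))
              (nhds 0) (nhds (a * b)) := by
            have hc1 : Continuous fun ε : ℝ => Real.sign (u i) * (γ ε).1 i := by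
              simp only [hγdef]
              exact continuous_const.mul
                (continuous_const.add (continuous_id.mul continuous_const))
            have hc2 : Continuous fun ε : ℝ => Real.sign (v j) * (γ ε).2 j := by
              simp only [hγdef]
              exact continuous_const.mul
                (continuous_const.add (continuous_id.mul continuous_const))
            have := (hc1.mul hc2).tendsto 0
            have h0 : (Real.sign (u i) * (γ 0).1 i) * (Real.sign (v j) * (γ 0).2 j)
                = a * b := by
              rw [hγ0]
            simp only [Pi.mul_def] at this; rwa [h0] at this
          have := hcont.eventually_lt_const hlt
          refine Filter.Eventually.filter_mono nhdsWithin_le_nhds (this.mono fun ε h => ?_)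
          intro _ _
          rw [hkey ε]
          exact le_of_lt h
        · -- a * b = |u i * v j| > 0
          have habpos : 0 < a * b := by
            rw [heq2]
            exact abs_pos.2 (mul_ne_zero hui hvj)
          rcases lt_trichotomy a 0 with ha | ha | ha
          · have hb : b < 0 := by nlinarith
            have hsum_neg : a + b < 0 := by linarith
            have hid : Filter.Tendsto (fun ε : ℝ => ε) (nhds 0) (nhds 0) :=
              Filter.tendsto_id
            have hevs : ∀ᶠ ε in nhdsWithin (0:ℝ) (Set.Ioi 0),
                0 < ε ∧ ε < -(a + b) := by
              refine eventually_mem_nhdsWithin.and ?_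
              exact Filter.Eventually.filter_mono nhdsWithin_le_nhds
                (hid.eventually_lt_const (show (0:ℝ) < -(a+b) by linarith))
            refine hevs.mono fun ε hε => ?_
            obtain ⟨hε0, hεs⟩ := hε
            intro _ _
            rw [hkey ε, hA1 ε i, hB1 ε j, ← hadef, ← hbdef, if_pos ha, if_pos hb]
            have heq3 : a * b = |u i * v j| := heq2
            have : (a + ε * 1) * (b + ε * 1) = a * b + ε * (a + b + ε) := by ring
            rw [this, ← heq3]
            nlinarith
          · exfalso
            rw [ha, zero_mul] at habpos
            exact lt_irrefl _ habpos
          · have hb : 0 < b := by nlinarith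
            refine Filter.Eventually.of_forall fun ε => ?_
            intro _ _
            rw [hkey ε, hA1 ε i, hB1 ε j, ← hadef, ← hbdef,
              if_neg (not_lt.2 ha.le), if_neg (not_lt.2 hb.le)]
            have heq3 : a * b = |u i * v j| := heq2
            nlinarith [heq3]
  -- conclude
  apply not_isLocalMin_of_curve γ hγt
  refine (hev.and eventually_mem_nhdsWithin).mono fun ε hε => ?_
  obtain ⟨hcond, hε0⟩ := hε
  have hε0' : (0:ℝ) < ε := hε0
  have hvalε : ∑ i, ∑ j, |(γ ε).1 i * (γ ε).2 j - u i * v j|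
      = (∑ i, |u i|) * (∑ j, |v j|) - (ε * A) * (ε * B) := by
    rw [exact_value u v (γ ε).1 (γ ε).2 hcond (hXz ε) (hYz ε), hsum1 ε, hsum2 ε]
  have hval0 : ∑ i, ∑ j, |x i * y j - u i * v j|
      = (∑ i, |u i|) * (∑ j, |v j|) := by
    have hc0 : ∀ i j, u i ≠ 0 → v j ≠ 0 →
        Real.sign (u i * v j) * (x i * y j) ≤ |u i * v j| := by
      intro i j hui hvj
      have := hbase i j hui hvj
      rw [sign_mul]
      nlinarith [this, (by ring : (Real.sign (u i) * x i) * (Real.sign (v j) * y j)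
        = Real.sign (u i) * Real.sign (v j) * (x i * y j))]
    rw [exact_value u v x y hc0 hx0 hy0, ← SS_eq, ← SS_eq, hSu, hSv]
    ring
  show ∑ i, ∑ j, |(γ ε).1 i * (γ ε).2 j - u i * v j|
      < ∑ i, ∑ j, |x i * y j - u i * v j|
  rw [hvalε, hval0]
  have : 0 < (ε * A) * (ε * B) := mul_pos (mul_pos hε0' hApos) (mul_pos hε0' hBpos)
  linarith

lemma corePos {m n : ℕ} (I : Finset (Fin m)) (J : Finset (Fin n))
    (a : Fin m → ℝ) (b : Fin n → ℝ) (p : Fin m → ℝ) (q : Fin n → ℝ)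
    (hp : ∀ i ∈ I, 0 < p i) (hq : ∀ j ∈ J, 0 < q j)
    (μ : Fin m → Fin n → ℝ)
    (hmem : ∀ i ∈ I, ∀ j ∈ J, μ i j ∈ signSet (a i * b j - p i * q j))
    (hrow : ∀ i ∈ I, ∑ j ∈ J, μ i j * b j = 0)
    (hcol : ∀ j ∈ J, ∑ i ∈ I, μ i j * a i = 0)
    (ha : ∃ i ∈ I, a i ≠ 0) (hb : ∃ j ∈ J, b j ≠ 0)
    (hanneg : ∀ i ∈ I, 0 ≤ a i) :
    ∀ i ∈ I, ∀ j ∈ J, a i * b j = p i * q j := by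
  obtain ⟨i0, hi0I, hi0⟩ := ha
  have haI : 0 < ∑ i ∈ I, a i :=
    Finset.sum_pos' hanneg ⟨i0, hi0I, (hanneg i0 hi0I).lt_of_ne (Ne.symm hi0)⟩
  obtain ⟨j0, hj0J, hj0⟩ := hb
  have hbpos : ∀ j ∈ J, 0 < b j := by
    intro j hjJ
    by_contra hc
    push_neg at hc
    have hforce : ∀ i ∈ I, μ i j = -1 := by
      intro i hiI
      have hres : a i * b j - p i * q j < 0 := by
        nlinarith [mul_pos (hp i hiI) (hq j hjJ),
          mul_nonneg (hanneg i hiI) (neg_nonneg.2 hc)]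
      have h' := hmem i hiI j hjJ
      rwa [signSet_of_neg hres] at h'
    have h0 := hcol j hjJ
    have heq : ∑ i ∈ I, μ i j * a i = ∑ i ∈ I, -(a i) :=
      Finset.sum_congr rfl fun i hi => by rw [hforce i hi]; ring
    rw [heq, Finset.sum_neg_distrib] at h0
    linarith
  have hJne : J.Nonempty := ⟨j0, hj0J⟩
  have hbI : 0 < ∑ j ∈ J, b j := Finset.sum_pos (fun j hj => hbpos j hj) hJne
  have hapos : ∀ i ∈ I, 0 < a i := by
    intro i hiI
    rcases (hanneg i hiI).lt_or_eq with h | h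
    · exact h
    · exfalso
      have hforce : ∀ j ∈ J, μ i j = -1 := by
        intro j hjJ
        have hres : a i * b j - p i * q j < 0 := by
          rw [← h, zero_mul]
          nlinarith [mul_pos (hp i hiI) (hq j hjJ)]
        have h' := hmem i hiI j hjJ
        rwa [signSet_of_neg hres] at h'
      have h0 := hrow i hiI
      have heq : ∑ j ∈ J, μ i j * b j = ∑ j ∈ J, -(b j) :=
        Finset.sum_congr rfl fun j hj => by rw [hforce j hj]; ring
      rw [heq, Finset.sum_neg_distrib] at h0
      linarith
  by_cases hconst : ∀ i ∈ I, ∀ k ∈ I, a i * p k = a k * p i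
  · -- constant-ratio case
    intro i hiI j hjJ
    rcases lt_trichotomy (a i * b j) (p i * q j) with hlt | heq | hgt
    · exfalso
      have hforce : ∀ l ∈ I, μ l j = -1 := by
        intro l hlI
        have hres : a l * b j - p l * q j < 0 := by
          have hc := hconst l hlI i hiI
          nlinarith [hp i hiI, hp l hlI, hq j hjJ, hbpos j hjJ]
        have h' := hmem l hlI j hjJ
        rwa [signSet_of_neg hres] at h'
      have h0 := hcol j hjJ
      have heq2 : ∑ l ∈ I, μ l j * a l = ∑ l ∈ I, -(a l) :=
        Finset.sum_congr rfl fun l hl => by rw [hforce l hl]; ring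
      rw [heq2, Finset.sum_neg_distrib] at h0
      linarith
    · exact heq
    · exfalso
      have hforce : ∀ l ∈ I, μ l j = 1 := by
        intro l hlI
        have hres : 0 < a l * b j - p l * q j := by
          have hc := hconst l hlI i hiI
          nlinarith [hp i hiI, hp l hlI, hq j hjJ, hbpos j hjJ]
        have h' := hmem l hlI j hjJ
        rwa [signSet_of_pos hres] at h'
      have h0 := hcol j hjJ
      have heq2 : ∑ l ∈ I, μ l j * a l = ∑ l ∈ I, a l :=
        Finset.sum_congr rfl fun l hl => by rw [hforce l hl]; ring
      rw [heq2] at h0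
      linarith
  · -- two distinct ratios exist
    push_neg at hconst
    obtain ⟨i1, hi1, k1, hk1, hne⟩ := hconst
    have growEq : ∀ i ∈ I, ∀ k ∈ I, a i * p k < a k * p i → ∀ j ∈ J, μ i j = μ k j := by
      intro i hiI k hkI hik
      have hle : ∀ j ∈ J, μ i j ≤ μ k j := by
        intro j hjJ
        rcases lt_or_ge (a i * b j) (p i * q j) with h1 | h1
        · have hforce : μ i j = -1 := by
            have h' := hmem i hiI j hjJ
            rwa [signSet_of_neg (by linarith)] at h'
          rw [hforce]
          exact neg_one_le_of_mem_signSet (hmem k hkI j hjJ)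
        · have h2 : 0 < a k * b j - p k * q j := by
            nlinarith [mul_lt_mul_of_pos_right hik (hbpos j hjJ),
              mul_le_mul_of_nonneg_left h1 (hp k hkI).le, hp i hiI, hq j hjJ,
              hbpos j hjJ, hp k hkI]
          have hforce : μ k j = 1 := by
            have h' := hmem k hkI j hjJ
            rwa [signSet_of_pos h2] at h'
          rw [hforce]
          exact le_one_of_mem_signSet (hmem i hiI j hjJ)
      have hsum : ∑ j ∈ J, (μ k j - μ i j) * b j = 0 := by
        have e1 := hrow i hiI
        have e2 := hrow k hkI
        have : ∑ j ∈ J, (μ k j - μ i j) * b j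
            = (∑ j ∈ J, μ k j * b j) - ∑ j ∈ J, μ i j * b j := by
          rw [← Finset.sum_sub_distrib]
          exact Finset.sum_congr rfl fun j _ => by ring
        rw [this, e1, e2, sub_zero]
      intro j hjJ
      have hterm := (Finset.sum_eq_zero_iff_of_nonneg
        (fun j hj => mul_nonneg (by linarith [hle j hj]) (hbpos j hj).le)).1 hsum j hjJ
      have := (hbpos j hjJ).ne'
      have hμeq : μ k j - μ i j = 0 := by
        rcases mul_eq_zero.1 hterm with h | h
        · exact h
        · exact absurd h this
      linarith
    have main : ∀ iL ∈ I, ∀ kL ∈ I, a iL * p kL < a kL * p iL →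
        ∀ i ∈ I, ∀ j ∈ J, a i * b j = p i * q j := by
      intro iL hiL kL hkL hlt
      have hallrows : ∀ l ∈ I, ∀ j ∈ J, μ l j = μ kL j := by
        intro l hlI j hjJ
        rcases lt_trichotomy (a l * p kL) (a kL * p l) with h | h | h
        · exact growEq l hlI kL hkL h j hjJ
        · have h2 : a iL * p l < a l * p iL := by
            nlinarith [mul_lt_mul_of_pos_right hlt (hp l hlI), hp kL hkL, hp l hlI,
              hp iL hiL]
          rw [← growEq iL hiL l hlI h2 j hjJ]
          exact growEq iL hiL kL hkL hlt j hjJ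
        · exact (growEq kL hkL l hlI h j hjJ).symm
      have hμ0 : ∀ j ∈ J, μ kL j = 0 := by
        intro j hjJ
        have h0 := hcol j hjJ
        have heq2 : ∑ i ∈ I, μ i j * a i = μ kL j * ∑ i ∈ I, a i := by
          rw [Finset.mul_sum]
          exact Finset.sum_congr rfl fun l hl => by rw [hallrows l hl j hjJ]
        rw [heq2] at h0
        exact (mul_eq_zero.1 h0).resolve_right (ne_of_gt haI)
      intro i hiI j hjJ
      have hz : μ i j = 0 := by rw [hallrows i hiI j hjJ, hμ0 j hjJ]
      have h' := hmem i hiI j hjJ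
      rw [hz] at h'
      have := eq_zero_of_zero_mem_signSet h'
      linarith
    rcases hne.lt_or_gt with hlt | hgt
    · exact main i1 hi1 k1 hk1 hlt
    · exact main k1 hk1 i1 hi1 hgt

lemma coreMix {m n : ℕ} (I : Finset (Fin m)) (J : Finset (Fin n))
    (a : Fin m → ℝ) (b : Fin n → ℝ) (p : Fin m → ℝ) (q : Fin n → ℝ)
    (hp : ∀ i ∈ I, 0 < p i) (hq : ∀ j ∈ J, 0 < q j)
    (μ : Fin m → Fin n → ℝ)
    (hmem : ∀ i ∈ I, ∀ j ∈ J, μ i j ∈ signSet (a i * b j - p i * q j))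
    (hrow : ∀ i ∈ I, ∑ j ∈ J, μ i j * b j = 0)
    (hcol : ∀ j ∈ J, ∑ i ∈ I, μ i j * a i = 0)
    (hb : ∃ j ∈ J, b j ≠ 0)
    (hposa : ∃ i ∈ I, 0 < a i) (hnega : ∃ i ∈ I, a i < 0) :
    (∑ i ∈ I, a i) = 0 ∧ (∑ j ∈ J, b j) = 0 ∧
      ∀ i ∈ I, ∀ j ∈ J, a i * b j ≤ p i * q j := by
  classical
  obtain ⟨ip, hipI, hip⟩ := hposa
  obtain ⟨im, himI, him⟩ := hnega
  set Bp : ℝ := ∑ j ∈ J.filter (fun j => 0 < b j), b j with hBp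
  set Bn : ℝ := ∑ j ∈ J.filter (fun j => ¬ 0 < b j), -(b j) with hBn
  -- basic row computations
  have rowPos : ∀ i ∈ I, 0 < a i → ∑ j ∈ J.filter (fun j => 0 < b j), μ i j * b j = -Bn := by
    intro i hiI hai
    have h0 := hrow i hiI
    rw [← Finset.sum_filter_add_sum_filter_not J (fun j => 0 < b j)] at h0
    have hr : ∑ j ∈ J.filter (fun j => ¬ 0 < b j), μ i j * b j = Bn := by
      rw [hBn]
      refine Finset.sum_congr rfl fun j hj => ?_
      obtain ⟨hjJ, hjb⟩ := Finset.mem_filter.1 hj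
      push_neg at hjb
      rcases hjb.lt_or_eq with h' | h'
      · have hres : a i * b j - p i * q j < 0 := by
          nlinarith [mul_pos (hp i hiI) (hq j hjJ), mul_pos hai (neg_pos.2 h')]
        have h'' := hmem i hiI j hjJ
        rw [signSet_of_neg hres] at h''
        rw [h'']; ring
      · rw [h', mul_zero, neg_zero]
    rw [hr] at h0
    linarith
  have rowNeg : ∀ i ∈ I, a i < 0 → ∑ j ∈ J.filter (fun j => ¬ 0 < b j), μ i j * b j = Bp := by
    intro i hiI hai
    have h0 := hrow i hiI
    rw [← Finset.sum_filter_add_sum_filter_not J (fun j => 0 < b j)] at h0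
    have hr : ∑ j ∈ J.filter (fun j => 0 < b j), μ i j * b j = -Bp := by
      rw [hBp, ← Finset.sum_neg_distrib]
      refine Finset.sum_congr rfl fun j hj => ?_
      obtain ⟨hjJ, hjb⟩ := Finset.mem_filter.1 hj
      have hres : a i * b j - p i * q j < 0 := by
        nlinarith [mul_pos (hp i hiI) (hq j hjJ), mul_pos (neg_pos.2 hai) hjb]
      have h'' := hmem i hiI j hjJ
      rw [signSet_of_neg hres] at h''
      rw [h'']; ring
    rw [hr] at h0
    linarith
  -- bounds
  have habs : ∀ i ∈ I, ∀ j ∈ J, -1 ≤ μ i j :=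
    fun i hi j hj => neg_one_le_of_mem_signSet (hmem i hi j hj)
  have hBnBp : Bn ≤ Bp := by
    have h1 := rowPos ip hipI hip
    have h2 : -Bp ≤ ∑ j ∈ J.filter (fun j => 0 < b j), μ ip j * b j := by
      rw [hBp, ← Finset.sum_neg_distrib]
      refine Finset.sum_le_sum fun j hj => ?_
      obtain ⟨hjJ, hjb⟩ := Finset.mem_filter.1 hj
      nlinarith [habs ip hipI j hjJ]
    linarith
  have hBpBn : Bp ≤ Bn := by
    have h1 := rowNeg im himI him
    have h2 : ∑ j ∈ J.filter (fun j => ¬ 0 < b j), μ im j * b j ≤ Bn := by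
      rw [hBn]
      refine Finset.sum_le_sum fun j hj => ?_
      obtain ⟨hjJ, hjb⟩ := Finset.mem_filter.1 hj
      push_neg at hjb
      nlinarith [habs im himI j hjJ]
    linarith
  have hBeq : Bp = Bn := le_antisymm hBpBn hBnBp
  have hSumb : ∑ j ∈ J, b j = 0 := by
    rw [← Finset.sum_filter_add_sum_filter_not J (fun j => 0 < b j)]
    have : ∑ j ∈ J.filter (fun j => ¬ 0 < b j), b j = -Bn := by
      rw [hBn, ← Finset.sum_neg_distrib]
      exact Finset.sum_congr rfl fun j hj => by ring
    rw [this, ← hBp]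
    linarith
  -- b attains both signs
  obtain ⟨j1, hj1J, hj1⟩ := hb
  have hBppos : 0 < Bp := by
    rcases hj1.lt_or_gt with h' | h'
    · have : 0 < Bn := by
        rw [hBn]
        refine Finset.sum_pos' (fun j hj => ?_) ⟨j1, Finset.mem_filter.2
          ⟨hj1J, not_lt.2 h'.le⟩, by linarith⟩
        obtain ⟨_, hjb⟩ := Finset.mem_filter.1 hj
        push_neg at hjb
        linarith
      linarith
    · rw [hBp]
      refine Finset.sum_pos (fun j hj => (Finset.mem_filter.1 hj).2) ⟨j1, ?_⟩
      exact Finset.mem_filter.2 ⟨hj1J, h'⟩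
  have hexbp : ∃ j ∈ J, 0 < b j := by
    by_contra hno
    push_neg at hno
    have : Bp ≤ 0 := Finset.sum_nonpos fun j hj =>
      hno j (Finset.mem_filter.1 hj).1
    linarith
  have hexbn : ∃ j ∈ J, b j < 0 := by
    by_contra hno
    push_neg at hno
    have : Bn ≤ 0 := Finset.sum_nonpos fun j hj => by
      have := hno j (Finset.mem_filter.1 hj).1
      linarith
    linarith [hBeq, hBppos]
  -- columns
  set Ap : ℝ := ∑ i ∈ I.filter (fun i => 0 < a i), a i with hAp
  set An : ℝ := ∑ i ∈ I.filter (fun i => ¬ 0 < a i), -(a i) with hAn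
  have colPos : ∀ j ∈ J, 0 < b j → ∑ i ∈ I.filter (fun i => 0 < a i), μ i j * a i = -An := by
    intro j hjJ hbj
    have h0 := hcol j hjJ
    rw [← Finset.sum_filter_add_sum_filter_not I (fun i => 0 < a i)] at h0
    have hr : ∑ i ∈ I.filter (fun i => ¬ 0 < a i), μ i j * a i = An := by
      rw [hAn]
      refine Finset.sum_congr rfl fun i hi => ?_
      obtain ⟨hiI, hia⟩ := Finset.mem_filter.1 hi
      push_neg at hia
      rcases hia.lt_or_eq with h' | h'
      · have hres : a i * b j - p i * q j < 0 := by
          nlinarith [mul_pos (hp i hiI) (hq j hjJ), mul_pos (neg_pos.2 h') hbj]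
        have h'' := hmem i hiI j hjJ
        rw [signSet_of_neg hres] at h''
        rw [h'']; ring
      · rw [h', mul_zero, neg_zero]
    rw [hr] at h0
    linarith
  have colNeg : ∀ j ∈ J, b j < 0 → ∑ i ∈ I.filter (fun i => ¬ 0 < a i), μ i j * a i = Ap := by
    intro j hjJ hbj
    have h0 := hcol j hjJ
    rw [← Finset.sum_filter_add_sum_filter_not I (fun i => 0 < a i)] at h0
    have hr : ∑ i ∈ I.filter (fun i => 0 < a i), μ i j * a i = -Ap := by
      rw [hAp, ← Finset.sum_neg_distrib]
      refine Finset.sum_congr rfl fun i hi => ?_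
      obtain ⟨hiI, hia⟩ := Finset.mem_filter.1 hi
      have hres : a i * b j - p i * q j < 0 := by
        nlinarith [mul_pos (hp i hiI) (hq j hjJ), mul_pos hia (neg_pos.2 hbj)]
      have h'' := hmem i hiI j hjJ
      rw [signSet_of_neg hres] at h''
      rw [h'']; ring
    rw [hr] at h0
    linarith
  obtain ⟨jp, hjpJ, hjp⟩ := hexbp
  obtain ⟨jn, hjnJ, hjn⟩ := hexbn
  have hAnAp : An ≤ Ap := by
    have h1 := colPos jp hjpJ hjp
    have h2 : -Ap ≤ ∑ i ∈ I.filter (fun i => 0 < a i), μ i jp * a i := by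
      rw [hAp, ← Finset.sum_neg_distrib]
      refine Finset.sum_le_sum fun i hi => ?_
      obtain ⟨hiI, hia⟩ := Finset.mem_filter.1 hi
      nlinarith [habs i hiI jp hjpJ]
    linarith
  have hApAn : Ap ≤ An := by
    have h1 := colNeg jn hjnJ hjn
    have h2 : ∑ i ∈ I.filter (fun i => ¬ 0 < a i), μ i jn * a i ≤ An := by
      rw [hAn]
      refine Finset.sum_le_sum fun i hi => ?_
      obtain ⟨hiI, hia⟩ := Finset.mem_filter.1 hi
      push_neg at hia
      nlinarith [habs i hiI jn hjnJ]
    linarith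
  have hAeq : Ap = An := le_antisymm hApAn hAnAp
  have hSuma : ∑ i ∈ I, a i = 0 := by
    rw [← Finset.sum_filter_add_sum_filter_not I (fun i => 0 < a i)]
    have : ∑ i ∈ I.filter (fun i => ¬ 0 < a i), a i = -An := by
      rw [hAn, ← Finset.sum_neg_distrib]
      exact Finset.sum_congr rfl fun i hi => by ring
    rw [this, ← hAp]
    linarith
  refine ⟨hSuma, hSumb, ?_⟩
  -- ratio bounds
  intro i hiI j hjJ
  have hpq : 0 < p i * q j := mul_pos (hp i hiI) (hq j hjJ)
  rcases lt_trichotomy (a i) 0 with hai | hai | hai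
  · rcases lt_trichotomy (b j) 0 with hbj | hbj | hbj
    · -- both negative: use rowNeg equality
      have h1 := rowNeg i hiI hai
      have hzero : ∀ k ∈ J.filter (fun j => ¬ 0 < b j), (μ i k + 1) * b k = 0 := by
        have hsum0 : ∑ k ∈ J.filter (fun j => ¬ 0 < b j), -((μ i k + 1) * b k) = 0 := by
          have hexp : ∑ k ∈ J.filter (fun j => ¬ 0 < b j), -((μ i k + 1) * b k)
              = -(∑ k ∈ J.filter (fun j => ¬ 0 < b j), μ i k * b k)
                + -(∑ k ∈ J.filter (fun j => ¬ 0 < b j), b k) := by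
            rw [← Finset.sum_neg_distrib, ← Finset.sum_neg_distrib,
              ← Finset.sum_add_distrib]
            exact Finset.sum_congr rfl fun k _ => by ring
          rw [hexp, h1]
          have : ∑ k ∈ J.filter (fun j => ¬ 0 < b j), b k = -Bn := by
            rw [hBn, ← Finset.sum_neg_distrib]
            exact Finset.sum_congr rfl fun k _ => by ring
          rw [this]
          linarith
        intro k hk
        have := (Finset.sum_eq_zero_iff_of_nonneg (fun k hk => ?_)).1 hsum0 k hk
        · linarith
        · obtain ⟨hkJ, hkb⟩ := Finset.mem_filter.1 hk
          push_neg at hkb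
          nlinarith [habs i hiI k hkJ]
      have hj' : j ∈ J.filter (fun j => ¬ 0 < b j) :=
        Finset.mem_filter.2 ⟨hjJ, not_lt.2 hbj.le⟩
      have := hzero j hj'
      have hμ : μ i j = -1 := by
        rcases mul_eq_zero.1 this with h' | h'
        · linarith
        · exact absurd h' hbj.ne
      have h'' := hmem i hiI j hjJ
      rw [hμ] at h''
      have := le_zero_of_neg_one_mem_signSet h''
      linarith
    · rw [hbj, mul_zero]; linarith
    · nlinarith
  · rw [hai, zero_mul]; linarith
  · rcases lt_trichotomy (b j) 0 with hbj | hbj | hbj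
    · nlinarith
    · rw [hbj, mul_zero]; linarith
    · -- both positive: use rowPos equality
      have h1 := rowPos i hiI hai
      have hzero : ∀ k ∈ J.filter (fun j => 0 < b j), (μ i k + 1) * b k = 0 := by
        have hsum0 : ∑ k ∈ J.filter (fun j => 0 < b j), (μ i k + 1) * b k = 0 := by
          have hexp : ∑ k ∈ J.filter (fun j => 0 < b j), (μ i k + 1) * b k
              = (∑ k ∈ J.filter (fun j => 0 < b j), μ i k * b k)
                + ∑ k ∈ J.filter (fun j => 0 < b j), b k := by
            rw [← Finset.sum_add_distrib]
            exact Finset.sum_congr rfl fun k _ => by ring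
          rw [hexp, h1, ← hBp]
          linarith
        intro k hk
        refine (Finset.sum_eq_zero_iff_of_nonneg (fun k hk => ?_)).1 hsum0 k hk
        obtain ⟨hkJ, hkb⟩ := Finset.mem_filter.1 hk
        nlinarith [habs i hiI k hkJ]
      have hj' : j ∈ J.filter (fun j => 0 < b j) := Finset.mem_filter.2 ⟨hjJ, hbj⟩
      have := hzero j hj'
      have hμ : μ i j = -1 := by
        rcases mul_eq_zero.1 this with h' | h'
        · linarith
        · exact absurd h' hbj.ne'
      have h'' := hmem i hiI j hjJ
      rw [hμ] at h''
      have := le_zero_of_neg_one_mem_signSet h''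
      linarith

lemma classify {m n : ℕ} (u x : Fin m → ℝ) (v y : Fin n → ℝ)
    (hx : x ≠ 0) (hy : y ≠ 0)
    (Λ : Matrix (Fin m) (Fin n) ℝ)
    (hmem : ∀ i j, Λ i j ∈ signSet (x i * y j - u i * v j))
    (hrow : ∀ i, ∑ j, Λ i j * y j = 0) (hcol : ∀ j, ∑ i, Λ i j * x i = 0) :
    (∀ i j, x i * y j = u i * v j) ∨
    (SS u x = 0 ∧ SS v y = 0 ∧ (∀ i j, u i * v j ≠ 0 → x i * y j / (u i * v j) ≤ 1) ∧
     (∀ i, u i = 0 → x i = 0) ∧ (∀ j, v j = 0 → y j = 0)) := by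
  classical
  have hyabs : 0 < ∑ j, |y j| := sum_abs_pos_of_ne_zero hy
  have hxabs : 0 < ∑ i, |x i| := sum_abs_pos_of_ne_zero hx
  have hsgn : ∀ t : ℝ, t ≠ 0 → Real.sign t = 1 ∨ Real.sign t = -1 := fun t ht =>
    (Real.sign_apply_eq_of_ne_zero t ht).symm
  -- zero coordinates
  have hx0 : ∀ i, u i = 0 → x i = 0 := by
    intro i hui
    by_contra hxi
    have key : ∀ j, Λ i j * y j = Real.sign (x i) * |y j| := by
      intro j
      by_cases hyj : y j = 0
      · rw [hyj, abs_zero, mul_zero, mul_zero]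
      · have hres : x i * y j - u i * v j = x i * y j := by rw [hui]; ring
        have hne : x i * y j ≠ 0 := mul_ne_zero hxi hyj
        have hm := hmem i j
        rw [hres] at hm
        rw [eq_sign_of_mem_signSet hne hm, sign_mul, mul_assoc, sign_mul_self]
    have h0 := hrow i
    rw [Finset.sum_congr rfl (fun j _ => key j), ← Finset.mul_sum] at h0
    rcases mul_eq_zero.1 h0 with h' | h'
    · exact sign_ne_zero_of_ne_zero hxi h'
    · linarith
  have hy0 : ∀ j, v j = 0 → y j = 0 := by
    intro j hvj
    by_contra hyj
    have key : ∀ i, Λ i j * x i = Real.sign (y j) * |x i| := by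
      intro i
      by_cases hxi : x i = 0
      · rw [hxi, abs_zero, mul_zero, mul_zero]
      · have hres : x i * y j - u i * v j = y j * x i := by rw [hvj]; ring
        have hne : y j * x i ≠ 0 := mul_ne_zero hyj hxi
        have hm := hmem i j
        rw [hres] at hm
        rw [eq_sign_of_mem_signSet hne hm, sign_mul, mul_assoc, sign_mul_self]
    have h0 := hcol j
    rw [Finset.sum_congr rfl (fun i _ => key i), ← Finset.mul_sum] at h0
    rcases mul_eq_zero.1 h0 with h' | h'
    · exact sign_ne_zero_of_ne_zero hyj h'
    · linarith
  -- transformed data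
  set I : Finset (Fin m) := Finset.univ.filter (fun i => u i ≠ 0) with hI
  set J : Finset (Fin n) := Finset.univ.filter (fun j => v j ≠ 0) with hJ
  set a : Fin m → ℝ := fun i => Real.sign (u i) * x i with hadef
  set b : Fin n → ℝ := fun j => Real.sign (v j) * y j with hbdef
  set p : Fin m → ℝ := fun i => |u i| with hpdef
  set q : Fin n → ℝ := fun j => |v j| with hqdef
  set μ : Fin m → Fin n → ℝ := fun i j => Real.sign (u i) * Real.sign (v j) * Λ i j with hμdef
  have hIne : ∀ i ∈ I, u i ≠ 0 := fun i hi => by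
    have := Finset.mem_filter.1 (hI ▸ hi)
    exact this.2
  have hJne : ∀ j ∈ J, v j ≠ 0 := fun j hj => by
    have := Finset.mem_filter.1 (hJ ▸ hj)
    exact this.2
  have hp' : ∀ i ∈ I, 0 < p i := fun i hi => abs_pos.2 (hIne i hi)
  have hq' : ∀ j ∈ J, 0 < q j := fun j hj => abs_pos.2 (hJne j hj)
  have hpm : ∀ i ∈ I, ∀ j ∈ J, Real.sign (u i) * Real.sign (v j) = 1
      ∨ Real.sign (u i) * Real.sign (v j) = -1 := by
    intro i hi j hj
    rcases hsgn (u i) (hIne i hi) with h1 | h1 <;>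
      rcases hsgn (v j) (hJne j hj) with h2 | h2 <;> rw [h1, h2] <;> norm_num
  have hmem' : ∀ i ∈ I, ∀ j ∈ J, μ i j ∈ signSet (a i * b j - p i * q j) := by
    intro i hi j hj
    have hresid : (Real.sign (u i) * Real.sign (v j)) * (x i * y j - u i * v j)
        = a i * b j - p i * q j := by
      have h1 := sign_mul_self (u i)
      have h2 := sign_mul_self (v j)
      simp only [hadef, hbdef, hpdef, hqdef]
      linear_combination (-(Real.sign (v j) * v j)) * h1 + (-(|u i|)) * h2
    have hμm := mem_signSet_smul (hpm i hi j hj) (hmem i j)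
    rw [hresid] at hμm
    exact hμm
  have hrowJ : ∀ i, ∑ j ∈ J, Λ i j * y j = 0 := by
    intro i
    rw [← hrow i]
    refine Finset.sum_subset (by rw [hJ]; exact Finset.filter_subset _ _) fun j _ hj => ?_
    have hvj : v j = 0 := by
      by_contra hc
      exact hj (by rw [hJ]; exact Finset.mem_filter.2 ⟨Finset.mem_univ _, hc⟩)
    rw [hy0 j hvj, mul_zero]
  have hcolI : ∀ j, ∑ i ∈ I, Λ i j * x i = 0 := by
    intro j
    rw [← hcol j]
    refine Finset.sum_subset (by rw [hI]; exact Finset.filter_subset _ _) fun i _ hi => ?_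
    have hui : u i = 0 := by
      by_contra hc
      exact hi (by rw [hI]; exact Finset.mem_filter.2 ⟨Finset.mem_univ _, hc⟩)
    rw [hx0 i hui, mul_zero]
  have hrow' : ∀ i ∈ I, ∑ j ∈ J, μ i j * b j = 0 := by
    intro i hi
    have heq : ∑ j ∈ J, μ i j * b j = Real.sign (u i) * ∑ j ∈ J, Λ i j * y j := by
      rw [Finset.mul_sum]
      refine Finset.sum_congr rfl fun j hj => ?_
      have hsq := sign_sq_of_ne_zero (hJne j hj)
      simp only [hμdef, hadef, hbdef]
      linear_combination (Real.sign (u i) * Λ i j * y j) * hsq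
    rw [heq, hrowJ i, mul_zero]
  have hcol' : ∀ j ∈ J, ∑ i ∈ I, μ i j * a i = 0 := by
    intro j hj
    have heq : ∑ i ∈ I, μ i j * a i = Real.sign (v j) * ∑ i ∈ I, Λ i j * x i := by
      rw [Finset.mul_sum]
      refine Finset.sum_congr rfl fun i hi => ?_
      have hsq := sign_sq_of_ne_zero (hIne i hi)
      simp only [hμdef, hadef, hbdef]
      linear_combination (Real.sign (v j) * Λ i j * x i) * hsq
    rw [heq, hcolI j, mul_zero]
  have ha' : ∃ i ∈ I, a i ≠ 0 := by
    obtain ⟨i0, hi0⟩ := Function.ne_iff.1 hx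
    have hxi0 : x i0 ≠ 0 := by simpa using hi0
    have hui0 : u i0 ≠ 0 := fun h => hxi0 (hx0 i0 h)
    exact ⟨i0, by rw [hI]; exact Finset.mem_filter.2 ⟨Finset.mem_univ _, hui0⟩,
      mul_ne_zero (sign_ne_zero_of_ne_zero hui0) hxi0⟩
  have hb' : ∃ j ∈ J, b j ≠ 0 := by
    obtain ⟨j0, hj0⟩ := Function.ne_iff.1 hy
    have hyj0 : y j0 ≠ 0 := by simpa using hj0
    have hvj0 : v j0 ≠ 0 := fun h => hyj0 (hy0 j0 h)
    exact ⟨j0, by rw [hJ]; exact Finset.mem_filter.2 ⟨Finset.mem_univ _, hvj0⟩,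
      mul_ne_zero (sign_ne_zero_of_ne_zero hvj0) hyj0⟩
  by_cases hmix : (∃ i ∈ I, 0 < a i) ∧ (∃ i ∈ I, a i < 0)
  · right
    obtain ⟨hSa, hSb, hrat⟩ := coreMix I J a b p q hp' hq' μ hmem' hrow' hcol' hb'
      hmix.1 hmix.2
    refine ⟨hSa, hSb, ?_, hx0, hy0⟩
    intro i j hc
    have hui : u i ≠ 0 := left_ne_zero_of_mul hc
    have hvj : v j ≠ 0 := right_ne_zero_of_mul hc
    have hiI : i ∈ I := by rw [hI]; exact Finset.mem_filter.2 ⟨Finset.mem_univ _, hui⟩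
    have hjJ : j ∈ J := by rw [hJ]; exact Finset.mem_filter.2 ⟨Finset.mem_univ _, hvj⟩
    have hle := hrat i hiI j hjJ
    apply div_le_one_of_sign_mul_le_abs hc
    rw [sign_mul, abs_mul]
    have hexp : a i * b j = Real.sign (u i) * Real.sign (v j) * (x i * y j) := by
      rw [hadef, hbdef]; dsimp only; ring
    have hexp2 : p i * q j = |u i| * |v j| := by rw [hpdef, hqdef]
    linarith [hexp ▸ hexp2 ▸ hle]
  · left
    have hone : (∀ i ∈ I, 0 ≤ a i) ∨ (∀ i ∈ I, a i ≤ 0) := by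
      by_cases hpos : ∃ i ∈ I, 0 < a i
      · left
        intro i hiI
        by_contra hc
        push_neg at hc
        exact hmix ⟨hpos, ⟨i, hiI, hc⟩⟩
      · right
        push_neg at hpos
        intro i hiI
        exact hpos i hiI
    have hglob : ∀ i ∈ I, ∀ j ∈ J, a i * b j = p i * q j := by
      rcases hone with hone | hone
      · exact corePos I J a b p q hp' hq' μ hmem' hrow' hcol' ha' hb' hone
      · have hres := corePos I J (fun i => -(a i)) (fun j => -(b j)) p q hp' hq'
          μ ?_ ?_ ?_ ?_ ?_ ?_
        · intro i hiI j hjJ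
          have := hres i hiI j hjJ
          simpa [neg_mul_neg] using this
        · intro i hi j hj
          have := hmem' i hi j hj
          have heq : (fun i => -(a i)) i * (fun j => -(b j)) j = a i * b j := by
            dsimp only; ring
          rw [heq]
          exact this
        · intro i hi
          have := hrow' i hi
          have heq : ∑ j ∈ J, μ i j * (fun j => -(b j)) j = -∑ j ∈ J, μ i j * b j := by
            rw [← Finset.sum_neg_distrib]
            exact Finset.sum_congr rfl fun j _ => by dsimp only; ring
          rw [heq, this, neg_zero]
        · intro j hj
          have := hcol' j hj
          have heq : ∑ i ∈ I, μ i j * (fun i => -(a i)) i = -∑ i ∈ I, μ i j * a i := by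
            rw [← Finset.sum_neg_distrib]
            exact Finset.sum_congr rfl fun i _ => by dsimp only; ring
          rw [heq, this, neg_zero]
        · obtain ⟨i0, hi0I, hi0⟩ := ha'
          exact ⟨i0, hi0I, by simpa using hi0⟩
        · obtain ⟨j0, hj0J, hj0⟩ := hb'
          exact ⟨j0, hj0J, by simpa using hj0⟩
        · intro i hiI
          linarith [hone i hiI]
    intro i j
    by_cases hui : u i = 0
    · rw [hx0 i hui, hui, zero_mul, zero_mul]
    · by_cases hvj : v j = 0
      · rw [hy0 j hvj, hvj, mul_zero, mul_zero]
      · have hiI : i ∈ I := by rw [hI]; exact Finset.mem_filter.2 ⟨Finset.mem_univ _, hui⟩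
        have hjJ : j ∈ J := by rw [hJ]; exact Finset.mem_filter.2 ⟨Finset.mem_univ _, hvj⟩
        have hres := hglob i hiI j hjJ
        have hres' : (Real.sign (u i) * x i) * (Real.sign (v j) * y j) = |u i| * |v j| := by
          have e1 : a i * b j = (Real.sign (u i) * x i) * (Real.sign (v j) * y j) := by
            rw [hadef, hbdef]
          have e2 : p i * q j = |u i| * |v j| := by rw [hpdef, hqdef]
          rw [← e1, ← e2]
          exact hres
        have hsqi := sign_sq_of_ne_zero hui
        have hsqj := sign_sq_of_ne_zero hvj
        have h1 := sign_mul_abs (u i)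
        have h2 := sign_mul_abs (v j)
        linear_combination (Real.sign (u i) * Real.sign (v j)) * hres'
          - (x i * y j * (Real.sign (v j) * Real.sign (v j))) * hsqi
          - (x i * y j) * hsqj
          + (Real.sign (v j) * |v j|) * h1 + (u i) * h2

end SaddleAux

/-- If `u ≠ 0` and `v ≠ 0`, then `(x,y)` is a saddle point of
`f(x,y) = Σᵢ Σⱼ |xᵢ yⱼ − uᵢ vⱼ|` (a critical point that is not a local minimum) iff one of
the conditions (a)-(c) holds. -/
theorem saddle_point_characterization (m n : ℕ) (hm : 1 ≤ m) (hn : 1 ≤ n)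
    (u : Fin m → ℝ) (v : Fin n → ℝ) (hu : u ≠ 0) (hv : v ≠ 0)
    (x : Fin m → ℝ) (y : Fin n → ℝ) :
    ((∃ Λ : Matrix (Fin m) (Fin n) ℝ,
        (∀ i j, Λ i j ∈ signSet (x i * y j - u i * v j)) ∧
        (∀ i, ∑ j, Λ i j * y j = 0) ∧ (∀ j, ∑ i, Λ i j * x i = 0)) ∧
      ¬ IsLocalMin (fun q : (Fin m → ℝ) × (Fin n → ℝ) =>
          ∑ i, ∑ j, |q.1 i * q.2 j - u i * v j|) (x, y))
    ↔
    ((|∑ i ∈ Finset.univ.filter (fun i => u i ≠ 0), Real.sign (u i) * x i|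
          = (∑ i ∈ Finset.univ.filter (fun i => u i = 0), |x i|) ∧ y = 0) ∨
      (x = 0 ∧
        |∑ j ∈ Finset.univ.filter (fun j => v j ≠ 0), Real.sign (v j) * y j|
          = ∑ j ∈ Finset.univ.filter (fun j => v j = 0), |y j|) ∨
      ((∑ i ∈ Finset.univ.filter (fun i => u i ≠ 0), Real.sign (u i) * x i) = 0 ∧
        (∑ j ∈ Finset.univ.filter (fun j => v j ≠ 0), Real.sign (v j) * y j) = 0 ∧
        (∀ i j, u i * v j ≠ 0 → x i * y j / (u i * v j) ≤ 1) ∧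
        (∀ i, u i = 0 → x i = 0) ∧ (∀ j, v j = 0 → y j = 0))) := by
  constructor
  · rintro ⟨⟨Λ, hmemΛ, hrowΛ, hcolΛ⟩, hnotmin⟩
    by_cases hy : y = 0
    · left
      subst hy
      refine ⟨?_, rfl⟩
      have hle := SaddleAux.crit_y0_le u v hv x Λ hmemΛ hcolΛ
      rcases hle.lt_or_eq with hlt | heq
      · exact absurd (SaddleAux.isLocalMin_y0 u v x hlt) hnotmin
      · exact heq
    · by_cases hx : x = 0
      · right; left
        subst hx
        refine ⟨rfl, ?_⟩
        have hmem' : ∀ (j : Fin n) (i : Fin m),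
            Λ i j ∈ signSet (y j * (0 : Fin m → ℝ) i - v j * u i) := by
          intro j i
          have e : y j * (0 : Fin m → ℝ) i - v j * u i
              = (0 : Fin m → ℝ) i * y j - u i * v j := by
            simp [mul_comm]
          rw [e]
          exact hmemΛ i j
        have hle := SaddleAux.crit_y0_le v u hu y (fun j i => Λ i j) hmem'
          (fun i => hrowΛ i)
        rcases hle.lt_or_eq with hlt | heq
        · exact absurd
            (SaddleAux.isLocalMin_of_swapped u v (SaddleAux.isLocalMin_y0 v u y hlt))
            hnotmin
        · exact heq
      · rcases SaddleAux.classify u x v y hx hy Λ hmemΛ hrowΛ hcolΛ with hglob | hc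
        · exact absurd (SaddleAux.isLocalMin_global u x v y hglob) hnotmin
        · right; right
          exact hc
  · rintro (⟨heq, hy⟩ | ⟨hx, heq⟩ | ⟨hSu, hSv, hrat, hx0, hy0⟩)
    · subst hy
      exact ⟨SaddleAux.crit_a u v x heq, SaddleAux.notmin_a u v x hu hv heq⟩
    · subst hx
      constructor
      · obtain ⟨Λ', h1, h2, h3⟩ := SaddleAux.crit_a v u y heq
        refine ⟨fun i j => Λ' j i, ?_, fun i => h3 i, fun j => h2 j⟩
        intro i j
        have e : y j * (0 : Fin m → ℝ) i - v j * u i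
            = (0 : Fin m → ℝ) i * y j - u i * v j := by
          simp [mul_comm]
        have := h1 j i
        rwa [e] at this
      · intro hmin
        exact SaddleAux.notmin_a v u y hv hu heq
          (SaddleAux.isLocalMin_of_swapped v u hmin)
    · by_cases hy : y = 0
      · subst hy
        have hZ : SaddleAux.ZZ u x = 0 :=
          Finset.sum_eq_zero fun i hi => by
            rw [hx0 i (Finset.mem_filter.1 hi).2, abs_zero]
        have heq : |SaddleAux.SS u x| = SaddleAux.ZZ u x := by
          have hSu' : SaddleAux.SS u x = 0 := hSu
          rw [hSu', abs_zero, hZ]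
        exact ⟨SaddleAux.crit_a u v x heq, SaddleAux.notmin_a u v x hu hv heq⟩
      · by_cases hx : x = 0
        · subst hx
          have hZ : SaddleAux.ZZ v y = 0 :=
            Finset.sum_eq_zero fun j hj => by
              rw [hy0 j (Finset.mem_filter.1 hj).2, abs_zero]
          have heq : |SaddleAux.SS v y| = SaddleAux.ZZ v y := by
            have hSv' : SaddleAux.SS v y = 0 := hSv
            rw [hSv', abs_zero, hZ]
          constructor
          · obtain ⟨Λ', h1, h2, h3⟩ := SaddleAux.crit_a v u y heq
            refine ⟨fun i j => Λ' j i, ?_, fun i => h3 i, fun j => h2 j⟩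
            intro i j
            have e : y j * (0 : Fin m → ℝ) i - v j * u i
                = (0 : Fin m → ℝ) i * y j - u i * v j := by
              simp [mul_comm]
            have := h1 j i
            rwa [e] at this
          · intro hmin
            exact SaddleAux.notmin_a v u y hv hu heq
              (SaddleAux.isLocalMin_of_swapped v u hmin)
        · exact ⟨SaddleAux.crit_c u x v y hSu hSv hrat hx0 hy0,
            SaddleAux.notmin_c u x v y hSu hSv hrat hx0 hy0 hx hy⟩
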